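/- arXiv:2311.12633 — 8 statements merged into one kernel-verified Lean document; each statement's English description precedes it below -/
import Mathlib

section
/- Let G be a finite group, N a normal subgroup of G with gcd(|N|, p) = 1, and P a p-subgroup of G. Then N_{G/N}(PN/N) = N_G(P)N/N. -/
open Subgroup Pointwise

/-- If `G` is a finite group, `N ⊴ G` with `gcd(|N|, p) = 1`, and `P` is a `p`-subgroup
of `G`, then `N_{G/N}(PN/N) = N_G(P)N/N`. -/
theorem normalizer_map_of_coprime (G : Type) [Group G] [Finite G] (p : ℕ) [Fact p.Prime]
    (N : Subgroup G) [N.Normal] (hN : Nat.Coprime (Nat.card N) p)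
    (P : Subgroup G) (hP : IsPGroup p P) :
    Subgroup.normalizer ((P.map (QuotientGroup.mk' N) : Subgroup (G ⧸ N)) : Set (G ⧸ N)) =
      (Subgroup.normalizer (P : Set G)).map (QuotientGroup.mk' N) := by
  set f := QuotientGroup.mk' N with hf
  have hsurj : Function.Surjective f := QuotientGroup.mk'_surjective N
  refine le_antisymm ?_ (le_normalizer_map f)
  -- set up
  set H : Subgroup G := P ⊔ N with hH
  have hPH : P ≤ H := le_sup_left
  have hNH : N ≤ H := le_sup_right
  -- cardinality facts
  have hcard : Nat.card H = Nat.card (H ⧸ N.subgroupOf H) * Nat.card N := by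
    rw [card_eq_card_quotient_mul_card_subgroup (N.subgroupOf H)]
    rw [Nat.card_congr (subgroupOfEquivOfLe hNH).toEquiv]
  have hq : Nat.card (H ⧸ N.subgroupOf H) ∣ Nat.card P := by
    have := Nat.card_congr (QuotientGroup.quotientInfEquivProdNormalQuotient P N).toEquiv
    rw [← hH] at this
    rw [← this]
    exact Dvd.intro _ (card_eq_card_quotient_mul_card_subgroup (N.subgroupOf P)).symm
  -- key claim: any p-subgroup of H with card equal to card P equals a Sylow of H
  have key : ∀ Q : Subgroup G, Q ≤ H → IsPGroup p Q → Nat.card Q = Nat.card P →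
      ∃ S : Sylow p H, (S : Subgroup H) = Q.subgroupOf H := by
    intro Q hQH hQp hQc
    obtain ⟨S, hle⟩ := (hQp.comap_subtype (K := H)).exists_le_sylow
    refine ⟨S, ?_⟩
    obtain ⟨k, hk⟩ := S.2.exists_card_eq
    have hdvd : Nat.card S ∣ Nat.card H := card_subgroup_dvd_card (S : Subgroup H)
    rw [hcard] at hdvd
    have hcop : Nat.Coprime (Nat.card S) (Nat.card N) := by
      rw [hk]; exact Nat.Coprime.pow_left k hN.symm
    have hSP : Nat.card S ∣ Nat.card Q := by
      rw [hQc]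
      exact (hcop.dvd_of_dvd_mul_right hdvd).trans hq
    have hQcard : Nat.card (Q.subgroupOf H) = Nat.card Q :=
      Nat.card_congr (subgroupOfEquivOfLe hQH).toEquiv
    refine (eq_of_le_of_card_ge hle ?_).symm
    show Nat.card (↥(S : Subgroup H)) ≤ Nat.card (Q.subgroupOf H)
    rw [hQcard]
    exact Nat.le_of_dvd Nat.card_pos hSP
  -- main argument
  intro xbar hx
  obtain ⟨x, rfl⟩ := hsurj xbar
  have hxH : x ∈ normalizer (H : Set G) := by
    have h1 : (normalizer ((P.map f : Subgroup (G ⧸ N)) : Set (G ⧸ N))).comap f =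
        normalizer (((P.map f).comap f : Subgroup G) : Set G) :=
      comap_normalizer_eq_of_surjective _ hsurj
    have h2 : (P.map f).comap f = H := by
      rw [comap_map_eq, hf, QuotientGroup.ker_mk']
    rw [h2] at h1
    have : x ∈ (normalizer ((P.map f : Subgroup (G ⧸ N)) : Set (G ⧸ N))).comap f := hx
    rwa [h1] at this
  -- the conjugate subgroup
  set Q : Subgroup G := MulAut.conj x • P with hQ
  have hQH : Q ≤ H := by
    rw [hQ, pointwise_smul_def]
    rintro - ⟨g, hg, rfl⟩
    exact (mem_normalizer_iff.mp hxH g).mp (hPH hg)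
  have hQp : IsPGroup p Q := by
    rw [hQ, pointwise_smul_def]; exact hP.map _
  have hQc : Nat.card Q = Nat.card P := by
    rw [hQ, pointwise_smul_def]
    exact (Nat.card_congr (P.equivMapOfInjective _ (MulAut.conj x).injective).toEquiv).symm
  obtain ⟨S, hS⟩ := key P hPH hP rfl
  obtain ⟨T, hT⟩ := key Q hQH hQp hQc
  obtain ⟨h, hh⟩ := MulAction.exists_smul_eq H T S
  have hh' : MulAut.conj (h : G) • Q = P := by
    have : ((h • T : Sylow p H) : Subgroup H) = (S : Subgroup H) := by rw [hh]
    rw [Sylow.coe_subgroup_smul, hT, hS, conj_smul_subgroupOf hQH] at this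
    have h1 := congrArg (Subgroup.map H.subtype) this
    rwa [subgroupOf_map_subtype, subgroupOf_map_subtype,
      inf_of_le_left (conj_smul_le_of_le hQH h), inf_of_le_left hPH] at h1
  have hnorm : (h : G) * x ∈ normalizer (P : Set G) := by
    have hgP : MulAut.conj ((h : G) * x) • P = P := by
      rw [map_mul, mul_smul, ← hQ, hh']
    have h2 : ∀ b : G, MulAut.conj ((h : G) * x) b ∈ P ↔ b ∈ P := fun b => by
      conv_lhs => rw [← hgP]
      exact smul_mem_pointwise_smul_iff
    rw [mem_normalizer_iff]
    intro b
    simpa [mul_assoc] using (h2 b).symm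
  -- conclude
  have hx1 : f ((h : G) * x) ∈ (normalizer (P : Set G)).map f := mem_map_of_mem f hnorm
  have hx2 : f (h : G) ∈ (normalizer (P : Set G)).map f := by
    have hhPN : (h : G) ∈ H := h.2
    have : f (h : G) ∈ P.map f ⊔ N.map f := by
      rw [← Subgroup.map_sup]; exact mem_map_of_mem f hhPN
    have hNbot : N.map f = ⊥ := by
      rw [hf, Subgroup.map_eq_bot_iff, QuotientGroup.ker_mk']
    rw [hNbot, sup_bot_eq] at this
    exact map_mono le_normalizer this
  have : f x = (f (h : G))⁻¹ * f ((h : G) * x) := by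
    rw [map_mul]; group
  rw [this]
  exact mul_mem (inv_mem hx2) hx1
end

section
/- Let N be a nontrivial soluble normal subgroup of a finite group G. If every minimal normal subgroup of G contained in N is not contained in Φ(G), then the Fitting subgroup F(N) is a direct product of minimal normal subgroups of G contained in N. -/
/-- `A` is a minimal normal subgroup of `G`. -/
def IsMinimalNormal (G : Type) [Group G] (A : Subgroup G) : Prop :=
  A.Normal ∧ A ≠ ⊥ ∧ ∀ B : Subgroup G, B.Normal → B ≤ A → B = ⊥ ∨ B = A

/-- The Fitting subgroup of a finite group: the join of all nilpotent normal subgroups. -/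
def fittingSubgroup (G : Type) [Group G] : Subgroup G :=
  ⨆ H ∈ {H : Subgroup G | H.Normal ∧ Group.IsNilpotent H}, H

open Subgroup
open scoped commutatorElement

section Auxiliary

lemma my_eq_of_le_of_card_le {G : Type} [Group G] [Finite G] {H K : Subgroup G} (h : H ≤ K)
    (hc : Nat.card K ≤ Nat.card H) : H = K := by
  apply SetLike.ext'
  refine Set.eq_of_subset_of_ncard_le h ?_ (Set.toFinite _)
  rwa [← Nat.card_coe_set_eq, ← Nat.card_coe_set_eq]

lemma my_derived_ne_top (X : Type) [Group X] [Group.IsSolvable X] [Nontrivial X] :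
    ⁅(⊤ : Subgroup X), (⊤ : Subgroup X)⁆ ≠ ⊤ := by
  intro htop
  obtain ⟨n, hn⟩ := Group.IsSolvable.solvable (G := X)
  have hall : ∀ m, derivedSeries X m = ⊤ := by
    intro m
    induction m with
    | zero => rfl
    | succ m ih => rw [derivedSeries_succ, ih, htop]
  rw [hall n] at hn
  exact top_ne_bot hn

/-- The frattini subgroup written as an infimum over coatoms. -/
lemma my_frattini_def (X : Type) [Group X] :
    frattini X = ⨅ M ∈ {H : Subgroup X | IsCoatom H}, M := rfl


/-- If `K` is normal in `G`, `K ≤ H` and `K` lands in the Frattini subgroup of `H`,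
then `K` lies in the Frattini subgroup of `G`. -/
lemma my_normal_le_frattini {G : Type} [Group G] [Finite G] {K H : Subgroup G}
    (hKn : K.Normal) (hKH : K ≤ H) (hfr : K.subgroupOf H ≤ frattini ↥H) :
    K ≤ frattini G := by
  haveI := hKn
  rw [my_frattini_def]
  refine le_iInf₂ fun M hM => ?_
  by_contra hKM
  have hsup : K ⊔ M = ⊤ := by
    refine hM.2 _ (lt_of_le_of_ne le_sup_right ?_)
    intro hEq
    exact hKM (hEq ▸ le_sup_left)
  have HeqH : H = K ⊔ (H ⊓ M) := by
    refine le_antisymm ?_ (sup_le hKH inf_le_left)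
    intro x hx
    have hxT : x ∈ K ⊔ M := hsup ▸ mem_top x
    rw [← SetLike.mem_coe, Subgroup.normal_mul] at hxT
    obtain ⟨k, hk, m, hm, rfl⟩ := hxT
    have hmH : m ∈ H := by
      have := H.mul_mem (H.inv_mem (hKH hk)) hx
      simpa [inv_mul_cancel_left] using this
    exact Subgroup.mul_mem _ (mem_sup_left hk) (mem_sup_right ⟨hmH, hm⟩)
  have hsup2 : K.subgroupOf H ⊔ (H ⊓ M).subgroupOf H = ⊤ := by
    rw [← subgroupOf_sup hKH inf_le_left, ← HeqH, subgroupOf_self]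
  have htop : (H ⊓ M).subgroupOf H = ⊤ := by
    refine frattini_nongenerating ?_
    rw [eq_top_iff, ← hsup2]
    exact sup_le (hfr.trans le_sup_right) le_sup_left
  have hHM : H ≤ M := by
    intro x hx
    have : (⟨x, hx⟩ : ↥H) ∈ (H ⊓ M).subgroupOf H := htop ▸ mem_top _
    exact (Subgroup.mem_subgroupOf.mp this).2
  exact hKM (hKH.trans hHM)

/-- In a finite nilpotent group the derived subgroup is contained in the Frattini subgroup. -/
lemma my_derived_le_frattini (X : Type) [Group X] [Finite X] [Group.IsNilpotent X] :
    ⁅(⊤ : Subgroup X), (⊤ : Subgroup X)⁆ ≤ frattini X := by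
  rw [my_frattini_def]
  refine le_iInf₂ fun M hM => ?_
  haveI hMn : M.Normal :=
    Subgroup.NormalizerCondition.normal_of_coatom M normalizerCondition_of_isNilpotent hM
  -- the quotient is cyclic, hence commutative
  obtain ⟨x, -, hxM⟩ := SetLike.exists_of_lt (lt_top_iff_ne_top.mpr hM.1)
  have hcyc : IsCyclic (X ⧸ M) := by
    refine ⟨⟨QuotientGroup.mk x, fun y => ?_⟩⟩
    have hcom : Subgroup.comap (QuotientGroup.mk' M) (Subgroup.zpowers (QuotientGroup.mk x)) = ⊤ := by
      refine hM.2 _ (lt_of_le_of_ne ?_ ?_)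
      · intro z hz
        have h1 : (QuotientGroup.mk' M) z = 1 := (QuotientGroup.eq_one_iff z).mpr hz
        exact Subgroup.mem_comap.mpr (by rw [h1]; exact Subgroup.one_mem _)
      · intro hEq
        exact hxM (by
          have : x ∈ Subgroup.comap (QuotientGroup.mk' M) (Subgroup.zpowers (QuotientGroup.mk x)) :=
            Subgroup.mem_comap.mpr (Subgroup.mem_zpowers _)
          rw [hEq]; exact this)
    have : Subgroup.zpowers (QuotientGroup.mk x : X ⧸ M) = ⊤ := by
      have hsurj : Function.Surjective (QuotientGroup.mk' M) := QuotientGroup.mk'_surjective M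
      calc Subgroup.zpowers (QuotientGroup.mk x : X ⧸ M)
          = Subgroup.map (QuotientGroup.mk' M)
              (Subgroup.comap (QuotientGroup.mk' M) (Subgroup.zpowers (QuotientGroup.mk x))) :=
            (Subgroup.map_comap_eq_self_of_surjective hsurj _).symm
        _ = Subgroup.map (QuotientGroup.mk' M) ⊤ := by rw [hcom]
        _ = ⊤ := by
            rw [← MonoidHom.range_eq_map]
            exact MonoidHom.range_eq_top.mpr hsurj
    show y ∈ Subgroup.zpowers (QuotientGroup.mk x : X ⧸ M)
    rw [this]; exact Subgroup.mem_top y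
  letI := hcyc.commGroup
  refine Subgroup.commutator_le.mpr fun g₁ _ g₂ _ => ?_
  have : (QuotientGroup.mk' M) ⁅g₁, g₂⁆ = 1 := by
    rw [map_commutatorElement]
    exact commutatorElement_eq_one_iff_commute.mpr (mul_comm _ _)
  exact (QuotientGroup.eq_one_iff _).mp this

lemma my_exists_minimalNormal_le {G : Type} [Group G] [Finite G] {M : Subgroup G} (hM : M.Normal) (hbot : M ≠ ⊥) :
    ∃ A : Subgroup G, IsMinimalNormal G A ∧ A ≤ M := by
  classical
  haveI := Fintype.ofFinite (Subgroup G)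
  obtain ⟨B, hBmem, hBmin⟩ := Finset.exists_min_image
    (Finset.univ.filter fun B : Subgroup G => B.Normal ∧ B ≠ ⊥ ∧ B ≤ M)
    (fun B => Nat.card ↥B) ⟨M, by simp [hM, hbot]⟩
  simp only [Finset.mem_filter, Finset.mem_univ, true_and] at hBmem hBmin
  obtain ⟨hBn, hBb, hBM⟩ := hBmem
  refine ⟨B, ⟨hBn, hBb, fun C hCn hCB => ?_⟩, hBM⟩
  by_cases hC : C = ⊥
  · exact Or.inl hC
  · refine Or.inr (my_eq_of_le_of_card_le hCB ?_)
    exact hBmin C ⟨hCn, hC, hCB.trans hBM⟩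

/-- Gaschütz' splitting argument. -/
lemma my_gaschutz {G : Type} [Group G] [Finite G] (A : Subgroup G) (hA : A.Normal)
    (hcomm : ∀ x ∈ A, ∀ y ∈ A, Commute x y)
    (hdisj : A ⊓ frattini G = ⊥) :
    ∃ K : Subgroup G, A ⊔ K = ⊤ ∧ A ⊓ K = ⊥ := by
  classical
  haveI := hA
  haveI := Fintype.ofFinite (Subgroup G)
  obtain ⟨K, hKmem, hKmin⟩ := Finset.exists_min_image
    (Finset.univ.filter fun K : Subgroup G => A ⊔ K = ⊤)
    (fun K => Nat.card ↥K) ⟨⊤, by simp⟩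
  simp only [Finset.mem_filter, Finset.mem_univ, true_and] at hKmem hKmin
  refine ⟨K, hKmem, ?_⟩
  set J := A ⊓ K with hJ
  have hJA : J ≤ A := inf_le_left
  have hJK : J ≤ K := inf_le_right
  have hJn : J.Normal := by
    constructor
    intro x hx g
    have hgT : g ∈ A ⊔ K := hKmem ▸ mem_top g
    rw [← SetLike.mem_coe, Subgroup.normal_mul] at hgT
    obtain ⟨a, ha, k, hk, rfl⟩ := hgT
    have hy : k * x * k⁻¹ ∈ J := by
      exact ⟨hA.conj_mem _ hx.1 k, K.mul_mem (K.mul_mem hk hx.2) (K.inv_mem hk)⟩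
    have hfix : a * (k * x * k⁻¹) * a⁻¹ = k * x * k⁻¹ := by
      have hc := (hcomm a ha _ (hJA hy)).eq
      rw [hc]
      group
    have : (a * k) * x * (a * k)⁻¹ = a * (k * x * k⁻¹) * a⁻¹ := by group
    rw [this, hfix]
    exact hy
  have hJfr : J.subgroupOf K ≤ frattini ↥K := by
    rw [my_frattini_def]
    refine le_iInf₂ fun L hL => ?_
    by_contra hJL
    have hsupL : J.subgroupOf K ⊔ L = ⊤ := by
      refine hL.2 _ (lt_of_le_of_ne le_sup_right ?_)
      intro hEq
      exact hJL (hEq ▸ le_sup_left)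
    have hmapK : J ⊔ L.map K.subtype = K := by
      have := congrArg (Subgroup.map K.subtype) hsupL
      rw [Subgroup.map_sup, subgroupOf_map_subtype, inf_of_le_left hJK] at this
      rw [this]
      rw [← MonoidHom.range_eq_map, K.range_subtype]
    have hAL : A ⊔ L.map K.subtype = ⊤ := by
      calc A ⊔ L.map K.subtype = A ⊔ (J ⊔ L.map K.subtype) := by
            rw [← sup_assoc, sup_of_le_left hJA]
        _ = A ⊔ K := by rw [hmapK]
        _ = ⊤ := hKmem
    have hle : Nat.card ↥K ≤ Nat.card ↥(L.map K.subtype) := hKmin _ hAL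
    have hLK : L.map K.subtype = K := my_eq_of_le_of_card_le (map_subtype_le L) hle
    have hLtop : L = ⊤ := Subgroup.map_injective K.subtype_injective
      (by rw [hLK, ← MonoidHom.range_eq_map, K.range_subtype])
    exact hL.1 hLtop
  have hJfrG : J ≤ frattini G := my_normal_le_frattini hJn hJK hJfr
  have hJbot : J = ⊥ := le_bot_iff.mp (hdisj ▸ le_inf hJA hJfrG)
  exact hJbot

lemma my_commute_of_mem_inf {X : Type} [Group X] {H K : Subgroup X}
    (hHc : ∀ x ∈ H, ∀ y ∈ H, Commute x y) (hKc : ∀ x ∈ K, ∀ y ∈ K, Commute x y)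
    {w : X} (hw : w ∈ H ⊓ K) : ∀ x ∈ H ⊔ K, Commute w x := by
  intro x hx
  rw [sup_eq_closure] at hx
  induction hx using Subgroup.closure_induction with
  | mem y hy =>
    rcases hy with hy | hy
    · exact hHc w hw.1 y hy
    · exact hKc w hw.2 y hy
  | one => exact Commute.one_right w
  | mul y z _ _ hy hz => exact Commute.mul_right hy hz
  | inv y _ hy => exact Commute.inv_right hy

lemma my_commutator_mem_inf {X : Type} [Group X] {H K : Subgroup X} (hH : H.Normal) (hK : K.Normal)
    (hHc : ∀ x ∈ H, ∀ y ∈ H, Commute x y) (hKc : ∀ x ∈ K, ∀ y ∈ K, Commute x y)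
    {x y : X} (hx : x ∈ H ⊔ K) (hy : y ∈ H ⊔ K) : ⁅x, y⁆ ∈ H ⊓ K := by
  haveI := hH; haveI := hK
  haveI : (H ⊓ K).Normal := Subgroup.normal_inf_normal H K
  set π := QuotientGroup.mk' (H ⊓ K) with hπ
  -- all elements of the image of H ⊔ K commute
  have hbase : ∀ a ∈ (H.map π : Set (X ⧸ (H ⊓ K))) ∪ (K.map π : Set (X ⧸ (H ⊓ K))),
      ∀ b ∈ (H.map π : Set (X ⧸ (H ⊓ K))) ∪ (K.map π : Set (X ⧸ (H ⊓ K))), Commute a b := by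
    rintro a (⟨u, hu, rfl⟩ | ⟨u, hu, rfl⟩) b (⟨v, hv, rfl⟩ | ⟨v, hv, rfl⟩)
    · exact (hHc u hu v hv).map π
    · -- u ∈ H, v ∈ K
      rw [← commutatorElement_eq_one_iff_commute, ← map_commutatorElement]
      refine (QuotientGroup.eq_one_iff _).mpr ?_
      constructor
      · have : u * (v * u⁻¹ * v⁻¹) ∈ H := H.mul_mem hu (by
          have := hH.conj_mem u⁻¹ (H.inv_mem hu) v
          simpa [mul_assoc] using this)
        simpa [commutatorElement_def, mul_assoc] using this
      · have : (u * v * u⁻¹) * v⁻¹ ∈ K := K.mul_mem (hK.conj_mem v hv u) (K.inv_mem hv)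
        simpa [commutatorElement_def, mul_assoc] using this
    · rw [← commutatorElement_eq_one_iff_commute, ← map_commutatorElement]
      refine (QuotientGroup.eq_one_iff _).mpr ?_
      constructor
      · have : (u * v * u⁻¹) * v⁻¹ ∈ H := H.mul_mem (hH.conj_mem v hv u) (H.inv_mem hv)
        simpa [commutatorElement_def, mul_assoc] using this
      · have : u * (v * u⁻¹ * v⁻¹) ∈ K := K.mul_mem hu (by
          have := hK.conj_mem u⁻¹ (K.inv_mem hu) v
          simpa [mul_assoc] using this)
        simpa [commutatorElement_def, mul_assoc] using this
    · exact (hKc u hu v hv).map π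
  have hcommQ : ∀ a ∈ H.map π ⊔ K.map π, ∀ b ∈ H.map π ⊔ K.map π, Commute a b := by
    intro a ha b hb
    rw [sup_eq_closure] at ha hb
    induction ha using Subgroup.closure_induction with
    | mem a' ha' =>
      induction hb using Subgroup.closure_induction with
      | mem b' hb' => exact hbase a' ha' b' hb'
      | one => exact Commute.one_right _
      | mul y z _ _ hy hz => exact Commute.mul_right hy hz
      | inv y _ hy => exact Commute.inv_right hy
    | one => exact Commute.one_left _
    | mul y z _ _ hy hz => exact Commute.mul_left hy hz
    | inv y _ hy => exact Commute.inv_left hy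
  have hπx : π x ∈ H.map π ⊔ K.map π := by
    rw [← Subgroup.map_sup]
    exact ⟨x, hx, rfl⟩
  have hπy : π y ∈ H.map π ⊔ K.map π := by
    rw [← Subgroup.map_sup]
    exact ⟨y, hy, rfl⟩
  have h1 : π ⁅x, y⁆ = 1 := by
    rw [map_commutatorElement]
    exact commutatorElement_eq_one_iff_commute.mpr (hcommQ _ hπx _ hπy)
  exact (QuotientGroup.eq_one_iff _).mp h1

lemma my_sup_nilpotent {X : Type} [Group X] {H K : Subgroup X} (hH : H.Normal) (hK : K.Normal)
    (hHc : ∀ x ∈ H, ∀ y ∈ H, Commute x y) (hKc : ∀ x ∈ K, ∀ y ∈ K, Commute x y) :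
    Group.IsNilpotent ↥(H ⊔ K) := by
  refine ⟨⟨2, ?_⟩⟩
  rw [eq_top_iff]
  intro x _
  rw [show (2 : ℕ) = 1 + 1 from rfl, Subgroup.mem_upperCentralSeries_succ_iff]
  intro y
  rw [Subgroup.upperCentralSeries_one]
  refine Subgroup.mem_center_iff.mpr fun g => ?_
  have hxy : (↑(x * y * x⁻¹ * y⁻¹) : X) ∈ H ⊓ K := by
    have := my_commutator_mem_inf hH hK hHc hKc x.2 y.2
    simpa [commutatorElement_def] using this
  have := my_commute_of_mem_inf hHc hKc hxy (↑g) g.2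
  exact Subtype.ext this.symm.eq

section Fitting

variable (X : Type) [Group X] [Finite X]

/-- If the Frattini subgroup of `X` is trivial, every nilpotent normal subgroup is abelian. -/
lemma my_abelian_of_nilpotent_normal (hfr : frattini X = ⊥)
    {H : Subgroup X} (hH : H.Normal) (hnil : Group.IsNilpotent ↥H) :
    ∀ x ∈ H, ∀ y ∈ H, Commute x y := by
  haveI := hH
  haveI := hnil
  have hDeq : ⁅H, H⁆ = Subgroup.map H.subtype ⁅(⊤ : Subgroup ↥H), ⊤⁆ := by
    rw [Subgroup.map_commutator, ← MonoidHom.range_eq_map, H.range_subtype]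
  have hDH : ⁅H, H⁆ ≤ H := Subgroup.commutator_le_left H H
  have hDfr : ⁅H, H⁆.subgroupOf H ≤ frattini ↥H := by
    rw [← comap_subtype, hDeq, comap_map_eq_self_of_injective H.subtype_injective]
    exact my_derived_le_frattini ↥H
  have hD : ⁅H, H⁆ ≤ frattini X :=
    my_normal_le_frattini (Subgroup.commutator_normal H H) hDH hDfr
  rw [hfr, le_bot_iff] at hD
  intro x hx y hy
  have : ⁅x, y⁆ ∈ ⁅H, H⁆ := Subgroup.commutator_mem_commutator hx hy
  rw [hD] at this
  exact commutatorElement_eq_one_iff_commute.mp (by simpa using this)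

/-- If the Frattini subgroup of `X` is trivial, the Fitting subgroup is a nilpotent
normal subgroup (and in fact abelian). -/
lemma my_fitting_mem (hfr : frattini X = ⊥) :
    (fittingSubgroup X).Normal ∧ Group.IsNilpotent ↥(fittingSubgroup X) := by
  classical
  haveI := Fintype.ofFinite (Subgroup X)
  set P : Subgroup X → Prop := fun H => H.Normal ∧ Group.IsNilpotent ↥H with hP
  have heq : fittingSubgroup X = (Finset.univ.filter P).sup id := by
    apply le_antisymm
    · refine iSup₂_le fun H hH => ?_
      exact Finset.le_sup (f := id) (by simp [hP]; exact hH)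
    · refine Finset.sup_le fun H hH => ?_
      simp only [Finset.mem_filter, Finset.mem_univ, true_and] at hH
      exact le_iSup₂ (f := fun (H : Subgroup X) (_ : P H) => H) H hH
  suffices hsuff : P ((Finset.univ.filter P).sup id) by rw [heq]; exact hsuff
  refine Finset.sup_induction ?_ ?_ ?_
  · refine ⟨inferInstance, ?_⟩
    haveI : Subsingleton (↥(⊥ : Subgroup X)) := by infer_instance
    infer_instance
  · rintro a ⟨han, hani⟩ b ⟨hbn, hbni⟩
    haveI := han; haveI := hbn
    refine ⟨inferInstance, ?_⟩
    exact my_sup_nilpotent han hbn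
      (my_abelian_of_nilpotent_normal X hfr han hani)
      (my_abelian_of_nilpotent_normal X hfr hbn hbni)
  · intro H hH
    simpa using (Finset.mem_filter.mp hH).2

lemma my_map_map_symm {X : Type} [Group X] (φ : X ≃* X) (H : Subgroup X) :
    Subgroup.map φ.toMonoidHom (Subgroup.map φ.symm.toMonoidHom H) = H := by
  ext x
  simp only [Subgroup.mem_map]
  constructor
  · rintro ⟨y, ⟨z, hz, rfl⟩, rfl⟩; simpa using hz
  · intro hx; exact ⟨φ.symm x, ⟨x, hx, rfl⟩, by simp⟩

lemma my_fitting_characteristic : (fittingSubgroup X).Characteristic := by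
  rw [Subgroup.characteristic_iff_le_map]
  intro φ
  refine iSup₂_le fun H hH => ?_
  have h1 : (Subgroup.map φ.symm.toMonoidHom H).Normal := hH.1.map _ φ.symm.surjective
  have h2 : Group.IsNilpotent ↥(Subgroup.map φ.symm.toMonoidHom H) := by
    haveI := hH.2
    exact nilpotent_of_mulEquiv (Subgroup.equivMapOfInjective H φ.symm.toMonoidHom φ.symm.injective)
  have h3 : Subgroup.map φ.symm.toMonoidHom H ≤ fittingSubgroup X :=
    le_iSup₂ (f := fun (H : Subgroup X) (_ : H.Normal ∧ Group.IsNilpotent ↥H) => H) _ ⟨h1, h2⟩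
  calc H = Subgroup.map φ.toMonoidHom (Subgroup.map φ.symm.toMonoidHom H) :=
        (my_map_map_symm φ H).symm
    _ ≤ Subgroup.map φ.toMonoidHom (fittingSubgroup X) := Subgroup.map_mono h3

end Fitting

/-- The Frattini subgroup of a normal subgroup maps into the Frattini subgroup. -/
lemma my_map_frattini_le {G : Type} [Group G] [Finite G] (N : Subgroup G) (hN : N.Normal) :
    (frattini ↥N).map N.subtype ≤ frattini G := by
  haveI := hN
  have hnorm : ((frattini ↥N).map N.subtype).Normal := by
    infer_instance
  refine my_normal_le_frattini hnorm (map_subtype_le _) ?_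
  rw [← comap_subtype, comap_map_eq_self_of_injective N.subtype_injective]

lemma my_minNormal_comm {G : Type} [Group G] {N A : Subgroup G} (hsol : IsSolvable ↥N)
    (hA : IsMinimalNormal G A) (hAN : A ≤ N) : ∀ x ∈ A, ∀ y ∈ A, Commute x y := by
  obtain ⟨hAnorm, hAbot, hmin⟩ := hA
  haveI := hAnorm
  haveI : Group.IsSolvable ↥N := hsol
  haveI : Group.IsSolvable ↥A := solvable_of_solvable_injective (Subgroup.inclusion_injective hAN)
  haveI : Nontrivial ↥A := (Subgroup.nontrivial_iff_ne_bot A).mpr hAbot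
  have hDeq : ⁅A, A⁆ = Subgroup.map A.subtype ⁅(⊤ : Subgroup ↥A), ⊤⁆ := by
    rw [Subgroup.map_commutator, ← MonoidHom.range_eq_map, A.range_subtype]
  have hD := hmin ⁅A, A⁆ inferInstance (Subgroup.commutator_le_left A A)
  have hDbot : ⁅A, A⁆ = ⊥ := by
    rcases hD with hh | hh
    · exact hh
    · exfalso
      apply my_derived_ne_top ↥A
      apply Subgroup.map_injective A.subtype_injective
      rw [← hDeq, hh, ← MonoidHom.range_eq_map, A.range_subtype]
  intro x hx y hy
  have hc : ⁅x, y⁆ ∈ ⁅A, A⁆ := Subgroup.commutator_mem_commutator hx hy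
  rw [hDbot] at hc
  exact commutatorElement_eq_one_iff_commute.mp (by simpa using hc)


end Auxiliary

/-- Let `N` be a nontrivial soluble normal subgroup of the finite group `G`. If every
minimal normal subgroup of `G` contained in `N` is not contained in `Φ(G)`, then the
Fitting subgroup `F(N)` is the (internal) direct product of some minimal normal
subgroups of `G` contained in `N`. -/
theorem fitting_eq_product_of_minimal_normals (G : Type) [Group G] [Finite G]
    (N : Subgroup G) [N.Normal] (hN : N ≠ ⊥) (hsol : IsSolvable ↥N)
    (h : ∀ A : Subgroup G, IsMinimalNormal G A → A ≤ N → ¬ A ≤ frattini G) :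
    ∃ S : Finset (Subgroup G),
      (∀ A ∈ S, IsMinimalNormal G A ∧ A ≤ N) ∧
      sSupIndep (↑S : Set (Subgroup G)) ∧
      (⨆ A ∈ S, A) = (fittingSubgroup ↥N).map N.subtype := by
  classical
  haveI := Fintype.ofFinite (Subgroup G)
  -- Step 1 : the Frattini subgroup meets `N` trivially
  have hΦN : frattini G ⊓ N = ⊥ := by
    by_contra hne
    obtain ⟨A, hAmin, hAle⟩ :=
      my_exists_minimalNormal_le (M := frattini G ⊓ N) inferInstance hne
    exact h A hAmin (hAle.trans inf_le_right) (hAle.trans inf_le_left)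
  -- Step 2 : the Frattini subgroup of `N` is trivial
  have hfrN : frattini ↥N = ⊥ := by
    have h1 : (frattini ↥N).map N.subtype ≤ frattini G ⊓ N :=
      le_inf (my_map_frattini_le N inferInstance) (map_subtype_le _)
    rw [hΦN, le_bot_iff] at h1
    exact Subgroup.map_injective N.subtype_injective (by rw [h1, Subgroup.map_bot])
  -- Step 3 : the Fitting subgroup of `N` is an abelian normal subgroup of `G`
  obtain ⟨hFitNorm, hFitNil⟩ := my_fitting_mem ↥N hfrN
  have hFitComm : ∀ x ∈ fittingSubgroup ↥N, ∀ y ∈ fittingSubgroup ↥N, Commute x y :=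
    my_abelian_of_nilpotent_normal ↥N hfrN hFitNorm hFitNil
  set F : Subgroup G := (fittingSubgroup ↥N).map N.subtype with hF
  have hFN : F ≤ N := map_subtype_le _
  have hFnorm : F.Normal := by
    haveI := my_fitting_characteristic ↥N
    infer_instance
  have hFcomm : ∀ x ∈ F, ∀ y ∈ F, Commute x y := by
    rintro x ⟨ξ, hξ, rfl⟩ y ⟨η, hη, rfl⟩
    exact (hFitComm ξ hξ η hη).map N.subtype
  -- Step 4 : every minimal normal subgroup of `G` inside `N` lies in `F`
  have hminF : ∀ A : Subgroup G, IsMinimalNormal G A → A ≤ N → A ≤ F := by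
    intro A hAmin hAN
    have hAcomm := my_minNormal_comm hsol hAmin hAN
    haveI := hAmin.1
    have hBnorm : (A.subgroupOf N).Normal := by infer_instance
    have hBnil : Group.IsNilpotent ↥(A.subgroupOf N) := by
      refine ⟨⟨1, ?_⟩⟩
      rw [Subgroup.upperCentralSeries_one, eq_top_iff]
      intro x _
      refine Subgroup.mem_center_iff.mpr fun g => ?_
      have hx : (↑(↑x : ↥N) : G) ∈ A := x.2
      have hg : (↑(↑g : ↥N) : G) ∈ A := g.2
      have := hAcomm _ hg _ hx
      exact Subtype.ext (Subtype.ext this.eq)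
    have hBle : A.subgroupOf N ≤ fittingSubgroup ↥N :=
      le_iSup₂ (f := fun (H : Subgroup ↥N) (_ : H.Normal ∧ Group.IsNilpotent ↥H) => H)
        _ ⟨hBnorm, hBnil⟩
    calc A = (A.subgroupOf N).map N.subtype := by
          rw [subgroupOf_map_subtype, inf_eq_left.mpr hAN]
      _ ≤ F := Subgroup.map_mono hBle
  -- Step 5 : choose a maximal independent family of minimal normal subgroups inside `N`
  obtain ⟨S, hSmem, hSmax⟩ := Finset.exists_max_image
    (Finset.univ.filter fun S : Finset (Subgroup G) =>
      (∀ A ∈ S, IsMinimalNormal G A ∧ A ≤ N) ∧ sSupIndep (↑S : Set (Subgroup G)))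
    (fun S => S.card) ⟨∅, by simp [sSupIndep_empty]⟩
  simp only [Finset.mem_filter, Finset.mem_univ, true_and] at hSmem hSmax
  obtain ⟨hSmin, hSind⟩ := hSmem
  refine ⟨S, hSmin, hSind, ?_⟩
  set S0 : Subgroup G := S.sup id with hS0
  have hS0eq : S0 = ⨆ A ∈ S, A := by
    rw [hS0, Finset.sup_eq_iSup]; rfl
  have hS0sSup : sSup (↑S : Set (Subgroup G)) = S0 := (Finset.sup_id_eq_sSup S).symm
  have hS0F : S0 ≤ F := by
    rw [hS0eq]
    exact iSup₂_le fun A hA => hminF A (hSmin A hA).1 (hSmin A hA).2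
  have hS0N : S0 ≤ N := hS0F.trans hFN
  have hS0norm : S0.Normal := by
    refine Finset.sup_induction inferInstance ?_ ?_
    · intro a ha b hb
      haveI := ha; haveI := hb
      infer_instance
    · intro A hA
      exact (hSmin A hA).1.1
  have hS0comm : ∀ x ∈ S0, ∀ y ∈ S0, Commute x y :=
    fun x hx y hy => hFcomm x (hS0F hx) y (hS0F hy)
  have hS0Φ : S0 ⊓ frattini G = ⊥ := by
    have hle : S0 ⊓ frattini G ≤ frattini G ⊓ N :=
      le_inf inf_le_right (inf_le_left.trans hS0N)
    exact le_bot_iff.mp (hΦN ▸ hle)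
  obtain ⟨K, hKtop, hKbot⟩ := my_gaschutz S0 hS0norm hS0comm hS0Φ
  haveI := hS0norm
  -- Step 6 : `F ⊓ K` is a normal subgroup of `G`
  set J : Subgroup G := F ⊓ K with hJ
  have hJnorm : J.Normal := by
    constructor
    intro x hx g
    have hgT : g ∈ S0 ⊔ K := hKtop ▸ mem_top g
    rw [← SetLike.mem_coe, Subgroup.normal_mul] at hgT
    obtain ⟨s, hs, k, hk, rfl⟩ := hgT
    have hy : k * x * k⁻¹ ∈ J :=
      ⟨hFnorm.conj_mem _ hx.1 k, K.mul_mem (K.mul_mem hk hx.2) (K.inv_mem hk)⟩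
    have hfix : s * (k * x * k⁻¹) * s⁻¹ = k * x * k⁻¹ := by
      have hc := (hFcomm s (hS0F hs) _ hy.1).eq
      rw [hc]
      group
    have hre : (s * k) * x * (s * k)⁻¹ = s * (k * x * k⁻¹) * s⁻¹ := by group
    rw [hre, hfix]
    exact hy
  -- Step 7 : `F ⊓ K` is trivial, by maximality of the family `S`
  have hJbot : J = ⊥ := by
    by_contra hne
    obtain ⟨A, hAmin, hAJ⟩ := my_exists_minimalNormal_le hJnorm hne
    haveI := hAmin.1
    have hAF : A ≤ F := hAJ.trans inf_le_left
    have hAK : A ≤ K := hAJ.trans inf_le_right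
    have hAN' : A ≤ N := hAF.trans hFN
    have hAS0 : A ⊓ S0 = ⊥ := by
      have hle : A ⊓ S0 ≤ S0 ⊓ K := le_inf inf_le_right (inf_le_left.trans hAK)
      exact le_bot_iff.mp (hKbot ▸ hle)
    have hAnotS : A ∉ S := by
      intro hAS
      refine hAmin.2.1 (le_bot_iff.mp ?_)
      rw [← hAS0]
      exact le_inf le_rfl (Finset.le_sup (f := id) hAS)
    have hmemP : ∀ B ∈ insert A S, IsMinimalNormal G B ∧ B ≤ N := by
      intro B hB
      rcases Finset.mem_insert.mp hB with rfl | hB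
      · exact ⟨hAmin, hAN'⟩
      · exact hSmin B hB
    have hindP : sSupIndep (↑(insert A S) : Set (Subgroup G)) := by
      rw [Finset.coe_insert]
      intro B hB
      rcases Set.mem_insert_iff.mp hB with rfl | hBS
      · rw [Set.insert_diff_self_of_notMem (by simpa using hAnotS)]
        rw [hS0sSup]
        exact disjoint_iff.mpr hAS0
      · have hBA : B ≠ A := fun hEq => hAnotS (hEq ▸ hBS)
        have hrw : insert A (↑S : Set (Subgroup G)) \ {B} = insert A ((↑S : Set (Subgroup G)) \ {B}) :=
          Set.insert_diff_of_notMem _ (by simpa using hBA.symm)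
        rw [hrw, sSup_insert]
        set C : Subgroup G := sSup ((↑S : Set (Subgroup G)) \ {B}) with hC
        have hBC : Disjoint B C := hSind hBS
        have hCS0 : C ≤ S0 := by
          rw [← hS0sSup]
          exact sSup_le_sSup Set.diff_subset
        have hBS0 : B ≤ S0 := Finset.le_sup (f := id) hBS
        refine disjoint_iff.mpr (eq_bot_iff.mpr ?_)
        intro x hx
        have hxB : x ∈ B := (Subgroup.mem_inf.mp hx).1
        have hxAC : x ∈ A ⊔ C := (Subgroup.mem_inf.mp hx).2
        rw [← SetLike.mem_coe, Subgroup.normal_mul] at hxAC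
        obtain ⟨a, ha, c, hc, hac⟩ := hxAC
        have haS0 : a ∈ S0 := by
          have hrw2 : a = x * c⁻¹ := by rw [← hac]; group
          rw [hrw2]
          exact S0.mul_mem (hBS0 hxB) (S0.inv_mem (hCS0 hc))
        have habot : a ∈ A ⊓ S0 := ⟨ha, haS0⟩
        rw [hAS0] at habot
        have ha1 : a = 1 := habot
        have hxc : x = c := by rw [← hac, ha1]; show 1 * c = c; rw [one_mul]
        have hcbot : c ∈ B ⊓ C := ⟨hxc ▸ hxB, hc⟩
        rw [disjoint_iff.mp hBC] at hcbot
        rw [hxc]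
        exact hcbot
    have hcard := hSmax (insert A S) ⟨hmemP, hindP⟩
    rw [Finset.card_insert_of_notMem hAnotS] at hcard
    omega
  -- Step 8 : conclude `F = S0`
  have hFS0 : F ≤ S0 := by
    intro x hx
    have hxT : x ∈ S0 ⊔ K := hKtop ▸ mem_top x
    rw [← SetLike.mem_coe, Subgroup.normal_mul] at hxT
    obtain ⟨s, hs, k, hk, hsk⟩ := hxT
    have hkF : k ∈ F := by
      have hrw2 : k = s⁻¹ * x := by rw [← hsk]; group
      rw [hrw2]
      exact F.mul_mem (F.inv_mem (hS0F hs)) hx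
    have hkJ : k ∈ J := ⟨hkF, hk⟩
    rw [hJbot] at hkJ
    have hk1 : k = 1 := hkJ
    rw [← hsk, hk1]
    show s * 1 ∈ S0
    rw [mul_one]
    exact hs
  rw [← hS0eq]
  exact le_antisymm hS0F hFS0
end

section
/- Let H be a p-subgroup of a finite group G. If G is p-nilpotent, then H satisfies the partial Π-property in G. -/
/-- A subgroup `H` of a finite group `G` satisfies the partial `Π`-property in `G` if
there is a chief series `1 = c 0 < c 1 < ... < c n = G` such that for every chief factor
`c (i+1) / c i`, the index `|G/c i : N_{G/c i}((H ⊔ c i) ⊓ c (i+1) / c i)|`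
(which equals `|G : N_G((H ⊔ c i) ⊓ c (i+1))|`) is a `π`-number for
`π = π((H ⊔ c i) ⊓ c (i+1) / c i)`, i.e. all its prime divisors divide the order
`|(H ⊔ c i) ⊓ c (i+1)| / |c i|` of that intersection. -/
def PartialPiProperty (G : Type) [Group G] (H : Subgroup G) : Prop :=
  ∃ (n : ℕ) (c : ℕ → Subgroup G),
    c 0 = ⊥ ∧ c n = ⊤ ∧
    (∀ i, i ≤ n → (c i).Normal) ∧
    (∀ i, i < n → c i < c (i + 1)) ∧
    (∀ i, i < n → ∀ X : Subgroup G, X.Normal → c i ≤ X → X ≤ c (i + 1) →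
      X = c i ∨ X = c (i + 1)) ∧
    (∀ i, i < n → ∀ q : ℕ, q.Prime →
      q ∣ (Subgroup.normalizer (((H ⊔ c i) ⊓ c (i + 1) : Subgroup G) : Set G)).index →
      q ∣ Nat.card ((H ⊔ c i) ⊓ c (i + 1) : Subgroup G) / Nat.card (c i))
/-- A group `G` is `p`-nilpotent if it has a normal `p`-complement: a normal subgroup
of order prime to `p` whose index is a power of `p`. -/
def IsPNilpotent (p : ℕ) (G : Type) [Group G] : Prop :=
  ∃ K : Subgroup G, K.Normal ∧ ¬ p ∣ Nat.card K ∧ ∃ m : ℕ, K.index = p ^ m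

section AuxPartialPi

set_option linter.unusedSectionVars false

variable {G : Type} [Group G] [Finite G]

lemma auxPi_card_lt_of_lt {A B : Subgroup G} (h : A < B) : Nat.card A < Nat.card B := by
  rcases lt_or_eq_of_le (Subgroup.card_le_of_le h.le) with h' | h'
  · exact h'
  · exact absurd (Subgroup.eq_of_le_of_card_ge h.le h'.ge) h.ne

lemma auxPi_normalizer_inf (A B : Subgroup G) :
    Subgroup.normalizer (A : Set G) ⊓ Subgroup.normalizer (B : Set G) ≤
      Subgroup.normalizer ((A ⊓ B : Subgroup G) : Set G) := by
  intro g hg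
  rw [Subgroup.mem_inf] at hg
  rw [Subgroup.mem_normalizer_iff]
  intro x
  rw [Subgroup.mem_inf, Subgroup.mem_inf,
    (Subgroup.mem_normalizer_iff.mp hg.1 x),
    (Subgroup.mem_normalizer_iff.mp hg.2 x)]

lemma auxPi_exists_min_normal {N M : Subgroup G} (hN : N.Normal) (hM : M.Normal)
    (h : N < M) : ∃ X : Subgroup G, X.Normal ∧ N < X ∧ X ≤ M ∧
      ∀ Y : Subgroup G, Y.Normal → N ≤ Y → Y ≤ X → Y = N ∨ Y = X := by
  obtain ⟨X, hXS, hmin⟩ := (wellFounded_lt (α := Subgroup G)).has_min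
    {X : Subgroup G | X.Normal ∧ N < X ∧ X ≤ M} ⟨M, hM, h, le_rfl⟩
  refine ⟨X, hXS.1, hXS.2.1, hXS.2.2, fun Y hY hNY hYX => ?_⟩
  rcases eq_or_lt_of_le hNY with he | hlt
  · exact Or.inl he.symm
  · right
    by_contra hne
    exact hmin Y ⟨hY, hlt, hYX.trans hXS.2.2⟩ (lt_of_le_of_ne hYX hne)

lemma auxPi_exists_chief_between (k : ℕ) :
    ∀ N M : Subgroup G, Nat.card M - Nat.card N ≤ k → N.Normal → M.Normal → N ≤ M →
    ∃ (n : ℕ) (c : ℕ → Subgroup G), c 0 = N ∧ c n = M ∧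
      (∀ i, i ≤ n → (c i).Normal) ∧
      (∀ i, i ≤ n → c i ≤ M) ∧
      (∀ i, i ≤ n → N ≤ c i) ∧
      (∀ i, i < n → c i < c (i + 1)) ∧
      (∀ i, i < n → ∀ X : Subgroup G, X.Normal → c i ≤ X → X ≤ c (i + 1) →
        X = c i ∨ X = c (i + 1)) := by
  induction k with
  | zero =>
    intro N M hk hN hM hNM
    have : N = M := Subgroup.eq_of_le_of_card_ge hNM (by omega)
    subst this
    exact ⟨0, fun _ => N, rfl, rfl, fun _ _ => hN, fun _ _ => le_rfl,
      fun _ _ => le_rfl, fun i hi => by omega, fun i hi => by omega⟩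
  | succ k ih =>
    intro N M hk hN hM hNM
    rcases eq_or_lt_of_le hNM with he | hlt
    · subst he
      exact ⟨0, fun _ => N, rfl, rfl, fun _ _ => hN, fun _ _ => le_rfl,
        fun _ _ => le_rfl, fun i hi => by omega, fun i hi => by omega⟩
    · obtain ⟨X, hXnorm, hNX, hXM, hXmin⟩ := auxPi_exists_min_normal hN hM hlt
      have hcard : Nat.card M - Nat.card X ≤ k := by
        have h1 : Nat.card N < Nat.card X := auxPi_card_lt_of_lt hNX
        have h2 : Nat.card X ≤ Nat.card M := Subgroup.card_le_of_le hXM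
        omega
      obtain ⟨n, c, hc0, hcn, hcnorm, hcM, hcX, hcstep, hcchief⟩ :=
        ih X M hcard hXnorm hM hXM
      refine ⟨n + 1, fun i => if i = 0 then N else c (i - 1), by simp,
        by simp [hcn], ?_, ?_, ?_, ?_, ?_⟩
      · intro i hi
        by_cases h : i = 0
        · simpa [h] using hN
        · simpa [h] using hcnorm (i - 1) (by omega)
      · intro i hi
        by_cases h : i = 0
        · simpa [h] using hNM
        · simpa [h] using hcM (i - 1) (by omega)
      · intro i hi
        by_cases h : i = 0
        · simp [h]
        · simpa [h] using hNX.le.trans (hcX (i - 1) (by omega))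
      · intro i hi
        by_cases h : i = 0
        · simpa [h, hc0] using hNX
        · have : i - 1 < n := by omega
          simpa [h, show i - 1 + 1 = i by omega] using hcstep (i - 1) this
      · intro i hi Y hY h1 h2
        by_cases h : i = 0
        · subst h
          simp only [if_pos rfl, if_neg (by omega : ¬ (0 + 1 = 0))] at h1 h2 ⊢
          simp only [Nat.add_sub_cancel, hc0] at h2 ⊢
          exact hXmin Y hY h1 h2
        · have hlt' : i - 1 < n := by omega
          simp only [if_neg h, if_neg (by omega : ¬ (i + 1 = 0))] at h1 h2 ⊢
          have he : i + 1 - 1 = i - 1 + 1 := by omega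
          rw [he] at h2 ⊢
          exact hcchief (i - 1) hlt' Y hY h1 h2

lemma auxPi_card_div_eq_relindex (A X : Subgroup G) (h : A ≤ X) :
    Nat.card X / Nat.card A = A.relIndex X := by
  have h1 : Nat.card (A.subgroupOf X) * (A.subgroupOf X).index = Nat.card X :=
    Subgroup.card_mul_index (A.subgroupOf X)
  have h2 : Nat.card (A.subgroupOf X) = Nat.card A :=
    Nat.card_congr (Subgroup.subgroupOfEquivOfLe h).toEquiv
  have h3 : 0 < Nat.card A := Nat.card_pos
  rw [Subgroup.relIndex, ← h1, h2, Nat.mul_div_cancel_left _ h3]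

lemma auxPi_relindex_inf_sup_dvd (H A B : Subgroup G) (hA : A.Normal) (hAB : A ≤ B) :
    A.relIndex ((H ⊔ A) ⊓ B) ∣ Nat.card H := by
  haveI := hA
  have h1 : A ≤ (H ⊔ A) ⊓ B := le_inf le_sup_right hAB
  have h2 : A.relIndex ((H ⊔ A) ⊓ B) ∣ A.relIndex (H ⊔ A) :=
    Dvd.intro _ (Subgroup.relIndex_mul_relIndex A ((H ⊔ A) ⊓ B) (H ⊔ A) h1 inf_le_left)
  rw [Subgroup.relIndex_sup_right] at h2
  exact h2.trans (Subgroup.index_dvd_card (A.subgroupOf H))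

lemma auxPi_relindex_inf_dvd_card (A B : Subgroup G) (hAB : A ≤ B) (S : Subgroup G)
    (hAS : A ≤ S) : A.relIndex (S ⊓ B) ∣ Nat.card B := by
  have h1 : A.relIndex (S ⊓ B) ∣ A.relIndex B :=
    Dvd.intro _ (Subgroup.relIndex_mul_relIndex A (S ⊓ B) B (le_inf hAS hAB) inf_le_right)
  exact h1.trans (Subgroup.index_dvd_card (A.subgroupOf B))

lemma auxPi_low_case {p : ℕ} [Fact p.Prime] (H A B K : Subgroup G) (hA : A.Normal)
    (hAB : A ≤ B) (hBK : B ≤ K) (hKp : ¬ p ∣ Nat.card K) (hHp : IsPGroup p H) :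
    (H ⊔ A) ⊓ B = A := by
  obtain ⟨nH, hnH⟩ := hHp.exists_card_eq
  have h1 : A.relIndex ((H ⊔ A) ⊓ B) ∣ p ^ nH :=
    hnH ▸ auxPi_relindex_inf_sup_dvd H A B hA hAB
  have h2 : A.relIndex ((H ⊔ A) ⊓ B) ∣ Nat.card K :=
    (auxPi_relindex_inf_dvd_card A B hAB (H ⊔ A) le_sup_right).trans
      (Subgroup.card_dvd_of_le hBK)
  obtain ⟨a, ha, he⟩ := (Nat.dvd_prime_pow Fact.out).mp h1
  rcases Nat.eq_zero_or_pos a with h0 | h0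
  · rw [h0, pow_zero] at he
    exact le_antisymm (Subgroup.relIndex_eq_one.mp he) (le_inf le_sup_right hAB)
  · exfalso
    exact hKp ((dvd_pow_self p (Nat.pos_iff_ne_zero.mp h0)).trans (he ▸ h2))

lemma auxPi_high_case {p : ℕ} [Fact p.Prime] (H A B K : Subgroup G) (hA : A.Normal)
    (hB : B.Normal) (hAB : A ≤ B) (hKA : K ≤ A) {m : ℕ} (hKind : K.index = p ^ m)
    (hHp : IsPGroup p H) (q : ℕ) (hq : q.Prime)
    (hdvd : q ∣ (Subgroup.normalizer (((H ⊔ A) ⊓ B : Subgroup G) : Set G)).index) :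
    q ∣ Nat.card ((H ⊔ A) ⊓ B : Subgroup G) / Nat.card A := by
  set X := (H ⊔ A) ⊓ B with hX
  have hAX : A ≤ X := le_inf le_sup_right hAB
  have hnorm : H ⊔ A ≤ Subgroup.normalizer (X : Set G) :=
    le_trans (le_inf Subgroup.le_normalizer
      (by rw [Subgroup.normalizer_eq_top_iff.mpr hB]; exact le_top))
      (auxPi_normalizer_inf (H ⊔ A) B)
  have hidx : (Subgroup.normalizer (X : Set G)).index ∣ p ^ m := by
    calc (Subgroup.normalizer (X : Set G)).index ∣ (H ⊔ A).index := Subgroup.index_dvd_of_le hnorm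
    _ ∣ K.index := Subgroup.index_dvd_of_le (hKA.trans le_sup_right)
    _ = p ^ m := hKind
  have hqp : q = p :=
    (Nat.prime_dvd_prime_iff_eq hq Fact.out).mp (hq.dvd_of_dvd_pow (hdvd.trans hidx))
  have hXA : X ≠ A := by
    intro h
    have hXn : X.Normal := h ▸ hA
    rw [Subgroup.normalizer_eq_top_iff.mpr hXn, Subgroup.index_top, Nat.dvd_one] at hdvd
    exact hq.ne_one hdvd
  obtain ⟨nH, hnH⟩ := hHp.exists_card_eq
  have h1 : A.relIndex X ∣ p ^ nH := hnH ▸ auxPi_relindex_inf_sup_dvd H A B hA hAB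
  obtain ⟨a, ha, he⟩ := (Nat.dvd_prime_pow Fact.out).mp h1
  have ha0 : a ≠ 0 := by
    intro h0
    rw [h0, pow_zero] at he
    exact hXA (le_antisymm (Subgroup.relIndex_eq_one.mp he) hAX)
  rw [auxPi_card_div_eq_relindex A X hAX, hqp, he]
  exact dvd_pow_self p ha0

end AuxPartialPi

/-- If `H` is a `p`-subgroup of a finite `p`-nilpotent group `G`, then `H` satisfies
the partial `Π`-property in `G`. -/
theorem partialPi_of_pNilpotent (G : Type) [Group G] [Finite G] (p : ℕ) [Fact p.Prime]
    (H : Subgroup G) (hH : IsPGroup p H) (hG : IsPNilpotent p G) :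
    PartialPiProperty G H := by
  obtain ⟨K, hKnorm, hKcard, m, hKind⟩ := hG
  obtain ⟨n1, c1, hc10, hc1n, hc1norm, hc1M, -, hc1step, hc1chief⟩ :=
    auxPi_exists_chief_between (Nat.card G) ⊥ K
      (le_trans (Nat.sub_le _ _) (Subgroup.card_le_card_group K))
      inferInstance hKnorm bot_le
  obtain ⟨n2, c2, hc20, hc2n, hc2norm, -, hc2X, hc2step, hc2chief⟩ :=
    auxPi_exists_chief_between (Nat.card G) K ⊤
      (le_trans (Nat.sub_le _ _) (Subgroup.card_le_card_group ⊤))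
      hKnorm inferInstance le_top
  set c : ℕ → Subgroup G := fun i => if i ≤ n1 then c1 i else c2 (i - n1) with hcdef
  have hclow : ∀ i, i ≤ n1 → c i = c1 i := fun i hi => if_pos hi
  have hchigh : ∀ i, n1 ≤ i → c i = c2 (i - n1) := by
    intro i hi
    rcases eq_or_lt_of_le hi with he | hlt
    · have : c i = c1 i := if_pos he.ge
      rw [this, ← he, hc1n, Nat.sub_self, hc20]
    · exact if_neg (by omega)
  have hnormal : ∀ i, i ≤ n1 + n2 → (c i).Normal := by
    intro i hi
    by_cases h : i ≤ n1
    · rw [hclow i h]; exact hc1norm i h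
    · rw [hchigh i (by omega)]; exact hc2norm (i - n1) (by omega)
  have hstep : ∀ i, i < n1 + n2 → c i < c (i + 1) := by
    intro i hi
    by_cases h : i < n1
    · rw [hclow i h.le, hclow (i + 1) h]
      exact hc1step i h
    · rw [hchigh i (by omega), hchigh (i + 1) (by omega),
        show i + 1 - n1 = (i - n1) + 1 by omega]
      exact hc2step (i - n1) (by omega)
  refine ⟨n1 + n2, c, ?_, ?_, hnormal, hstep, ?_, ?_⟩
  · rw [hclow 0 (Nat.zero_le _), hc10]
  · rw [hchigh (n1 + n2) (Nat.le_add_right _ _), Nat.add_sub_cancel_left, hc2n]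
  · intro i hi X hX h1 h2
    by_cases h : i < n1
    · rw [hclow i h.le] at h1 ⊢
      rw [hclow (i + 1) h] at h2 ⊢
      exact hc1chief i h X hX h1 h2
    · rw [hchigh i (by omega)] at h1 ⊢
      rw [hchigh (i + 1) (by omega), show i + 1 - n1 = (i - n1) + 1 by omega] at h2 ⊢
      exact hc2chief (i - n1) (by omega) X hX h1 h2
  · intro i hi q hq hdvd
    by_cases h : i < n1
    · exfalso
      have e1 : c i = c1 i := hclow i h.le
      have e2 : c (i + 1) = c1 (i + 1) := hclow (i + 1) h
      rw [e1, e2] at hdvd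
      rw [auxPi_low_case H (c1 i) (c1 (i + 1)) K (hc1norm i h.le) (hc1step i h).le
        (hc1M (i + 1) h) hKcard hH] at hdvd
      rw [Subgroup.normalizer_eq_top_iff.mpr (hc1norm i h.le), Subgroup.index_top,
        Nat.dvd_one] at hdvd
      exact hq.ne_one hdvd
    · have hKi : K ≤ c i := by
        rw [hchigh i (by omega)]
        exact hc2X (i - n1) (by omega)
      exact auxPi_high_case H (c i) (c (i + 1)) K (hnormal i (by omega))
        (hnormal (i + 1) (by omega)) (hstep i hi).le hKi hKind hH q hq hdvd
end

section
/- Let H ≤ N ≤ G with H a p-subgroup of the finite group G. If H satisfies the partial Π-property in G, then H satisfies the partial Π-property in N, where N is a normal subgroup of G. -/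
section Helpers

variable {G : Type*} [Group G]

lemma myDedekind (A B C : Subgroup G) [A.Normal] (hAC : A ≤ C) :
    (B ⊔ A) ⊓ C = (B ⊓ C) ⊔ A := by
  apply le_antisymm
  · intro x hx
    have hx1 : x ∈ B ⊔ A := hx.1
    have hx2 : x ∈ C := hx.2
    rw [← SetLike.mem_coe, Subgroup.mul_normal] at hx1
    obtain ⟨b, hb, a, ha, rfl⟩ := hx1
    have hbC : b ∈ C := by
      have : b = b * a * a⁻¹ := by group
      rw [this]
      exact mul_mem hx2 (inv_mem (hAC ha))
    exact mul_mem (le_sup_left (a := B ⊓ C) ⟨hb, hbC⟩) (le_sup_right (b := A) ha)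
  · exact sup_le (le_inf (inf_le_left.trans le_sup_left) inf_le_right)
      (le_inf le_sup_right hAC)

lemma myRelindexDvd (M N : Subgroup G) [N.Normal] : M.relIndex N ∣ M.index := by
  have key : M.relIndex N = M.relIndex (M ⊔ N) := by
    have e : (↥N ⧸ M.subgroupOf N) ≃ (↥(M ⊔ N) ⧸ M.subgroupOf (M ⊔ N)) := by
      refine Equiv.ofBijective (Quotient.map' (Subgroup.inclusion le_sup_right) ?_) ⟨?_, ?_⟩
      · intro a b hab
        rw [QuotientGroup.leftRel_apply] at hab ⊢
        rwa [Subgroup.mem_subgroupOf] at hab ⊢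
      · intro a b
        induction a using Quotient.inductionOn'
        induction b using Quotient.inductionOn'
        intro hab
        rw [Quotient.map'_mk'', Quotient.map'_mk'', Quotient.eq''] at hab
        rw [Quotient.eq'']
        rw [QuotientGroup.leftRel_apply] at hab ⊢
        rwa [Subgroup.mem_subgroupOf] at hab ⊢
      · intro x
        induction x using Quotient.inductionOn' with
        | h x =>
          obtain ⟨x, hx⟩ := x
          rw [← SetLike.mem_coe, Subgroup.mul_normal] at hx
          obtain ⟨m, hm, n, hn, rfl⟩ := hx
          refine ⟨Quotient.mk'' ⟨m * n * m⁻¹, Subgroup.Normal.conj_mem ‹N.Normal› n hn m⟩, ?_⟩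
          rw [Quotient.map'_mk'', Quotient.eq'']
          rw [QuotientGroup.leftRel_apply, Subgroup.mem_subgroupOf]
          show ((⟨m * n * m⁻¹, _⟩ : ↥(M ⊔ N)) : G)⁻¹ * (⟨m * n, _⟩ : ↥(M ⊔ N)) ∈ M
          simpa using by
            have h5 : m * (n⁻¹ * m⁻¹) * (m * n) = m := by group
            rw [h5]; exact hm
    calc M.relIndex N = Nat.card (↥N ⧸ M.subgroupOf N) := rfl
      _ = Nat.card (↥(M ⊔ N) ⧸ M.subgroupOf (M ⊔ N)) := Nat.card_congr e
      _ = M.relIndex (M ⊔ N) := rfl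
  rw [key]
  exact Subgroup.relIndex_dvd_index_of_le le_sup_left

lemma myCardDiv [Finite G] {U K : Subgroup G} (h : U ≤ K) :
    Nat.card K / Nat.card U = (U.subgroupOf K).index := by
  have h1 : Nat.card (U.subgroupOf K) * (U.subgroupOf K).index = Nat.card K :=
    Subgroup.card_mul_index _
  have h2 : Nat.card (U.subgroupOf K) = Nat.card U :=
    Nat.card_congr (Subgroup.subgroupOfEquivOfLe h).toEquiv
  have h3 : (Nat.card U : ℕ) ≠ 0 := Nat.card_pos.ne'
  rw [← h1, h2, Nat.mul_div_cancel_left _ (Nat.pos_of_ne_zero h3)]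

lemma myPPowIndex [Finite G] {p : ℕ} [Fact p.Prime] {U K W : Subgroup G} [U.Normal]
    (hW : IsPGroup p W) (hUK : U ≤ K) (hK : K = W ⊔ U) :
    ∃ k : ℕ, (U.subgroupOf K).index = p ^ k := by
  have hWK : W ≤ K := hK ▸ le_sup_left
  have : (U.subgroupOf K).Normal := Subgroup.Normal.subgroupOf ‹U.Normal› K
  let φ : ↥W →* K ⧸ (U.subgroupOf K) :=
    (QuotientGroup.mk' (U.subgroupOf K)).comp (Subgroup.inclusion hWK)
  have hφ : Function.Surjective φ := by
    intro x
    induction x using Quotient.inductionOn' with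
    | h x =>
      obtain ⟨x, hx⟩ := x
      have hx' : x ∈ W ⊔ U := hK ▸ hx
      rw [← SetLike.mem_coe, Subgroup.mul_normal] at hx'
      obtain ⟨w, hw, u, hu, rfl⟩ := hx'
      refine ⟨⟨w, hw⟩, ?_⟩
      show QuotientGroup.mk _ = _
      rw [QuotientGroup.eq]
      rw [Subgroup.mem_subgroupOf]
      show ((Subgroup.inclusion hWK ⟨w, hw⟩ : ↥K) : G)⁻¹ * (⟨w * u, _⟩ : ↥K) ∈ U
      simpa using hu
  have hq : IsPGroup p (K ⧸ (U.subgroupOf K)) := (hW.of_surjective φ hφ)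
  have := hq.exists_card_eq
  rwa [Subgroup.index]

variable {G : Type*} [Group G]

lemma myMapConjEqOfNormal {x : G} {U : Subgroup G} (hU : U.Normal) :
    U.map (MulAut.conj x).toMonoidHom = U := by
  ext z
  simp only [Subgroup.mem_map]
  constructor
  · rintro ⟨u, hu, rfl⟩
    exact hU.conj_mem u hu x
  · intro hz
    exact ⟨x⁻¹ * z * x, by simpa using hU.conj_mem z hz x⁻¹, by simp [MulAut.conj]; group⟩

lemma myNormalizerOfConjMapEq {x : G} {K : Subgroup G}
    (h : K.map (MulAut.conj x).toMonoidHom = K) : x ∈ Subgroup.normalizer (K : Set G) := by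
  rw [Subgroup.mem_normalizer_iff]
  intro y
  constructor
  · intro hy
    have : (MulAut.conj x).toMonoidHom y ∈ K.map (MulAut.conj x).toMonoidHom :=
      Subgroup.mem_map_of_mem _ hy
    rw [h] at this
    simpa [MulAut.conj] using this
  · intro hy
    have : x * y * x⁻¹ ∈ K.map (MulAut.conj x).toMonoidHom := by rw [h]; exact hy
    rw [Subgroup.mem_map] at this
    obtain ⟨u, hu, heq⟩ := this
    have : u = y := by
      have : x * u * x⁻¹ = x * y * x⁻¹ := by simpa [MulAut.conj] using heq
      exact mul_left_cancel (mul_right_cancel this)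
    rwa [← this]

lemma myKey {G : Type} [Group G] [Finite G] {p : ℕ} [Fact p.Prime]
    {H N : Subgroup G} [N.Normal] (hHN : H ≤ N) (hH : IsPGroup p H)
    {Gl Gu : Subgroup G} [Gl.Normal] [Gu.Normal] (hlu : Gl ≤ Gu)
    (hdvd : ∀ q : ℕ, q.Prime → q ∣ (Subgroup.normalizer (((H ⊔ Gl) ⊓ Gu : Subgroup G) : Set G)).index →
      q ∣ Nat.card ((H ⊔ Gl) ⊓ Gu : Subgroup G) / Nat.card Gl)
    {U V : Subgroup ↥N} (hUn : U.Normal) (hVn : V.Normal)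
    (hGlU : Gl.subgroupOf N ≤ U) (hUV : U ≤ V) (hVGu : V ≤ Gu.subgroupOf N)
    (q : ℕ) (hq : q.Prime)
    (hqd : q ∣ (Subgroup.normalizer (((H.subgroupOf N ⊔ U) ⊓ V : Subgroup ↥N) : Set ↥N)).index) :
    q ∣ Nat.card ((H.subgroupOf N ⊔ U) ⊓ V : Subgroup ↥N) / Nat.card U := by
  haveI := hUn
  set X : Subgroup G := (H ⊔ Gl) ⊓ Gu with hXdef
  have hXd : X = (H ⊓ Gu) ⊔ Gl := myDedekind Gl H Gu hlu
  have hGlX : Gl ≤ X := hXd ▸ le_sup_right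
  set K : Subgroup ↥N := (H.subgroupOf N ⊔ U) ⊓ V with hKdef
  have hUK : U ≤ K := le_inf le_sup_right hUV
  have hKd : K = (H.subgroupOf N ⊓ V) ⊔ U := myDedekind U (H.subgroupOf N) V hUV
  -- the subgroup H ∩ V viewed in N is a p-group
  have hH' : IsPGroup p (H.subgroupOf N) := by
    have := (Subgroup.subgroupOfEquivOfLe hHN)
    exact hH.comap_of_injective N.subtype N.subtype_injective
  -- q = p case
  rcases eq_or_ne q p with rfl | hqp
  · obtain ⟨k, hk⟩ := myPPowIndex (p := q) (hH'.to_inf_left (K := V)) hUK hKd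
    rw [myCardDiv hUK, hk]
    rcases Nat.eq_zero_or_pos k with rfl | hkpos
    · exfalso
      have h1 : (U.subgroupOf K).index = 1 := by rw [hk, pow_zero]
      have h2 : U.subgroupOf K = ⊤ := Subgroup.index_eq_one.mp h1
      have hKU : K = U := le_antisymm (Subgroup.subgroupOf_eq_top.mp h2) hUK
      have : K.Normal := hKU ▸ hUn
      rw [Subgroup.normalizer_eq_top_iff.mpr this, Subgroup.index_top] at hqd
      exact hq.ne_one (Nat.dvd_one.mp hqd)
    · exact dvd_pow_self q hkpos.ne'
  -- q ≠ p case: contradiction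
  · exfalso
    haveI : Fact (Nat.Prime q) := ⟨hq⟩
    -- all prime divisors of |G : N_G(X)| are p
    have hXnp : ∀ r : ℕ, r.Prime → r ∣ (Subgroup.normalizer (X : Set G)).index → r = p := by
      intro r hr hrd
      have h1 := hdvd r hr hrd
      rw [myCardDiv hGlX] at h1
      obtain ⟨k, hk⟩ := myPPowIndex (p := p) (hH.to_inf_left (K := Gu)) hGlX hXd
      rw [hk] at h1
      have := hr.dvd_of_dvd_pow h1
      exact (Nat.prime_dvd_prime_iff_eq hr Fact.out).mp this
    set M : Subgroup G := (Subgroup.normalizer (X : Set G)) with hMdef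
    have hMq : ¬ q ∣ M.index := fun hdq => hqp (hXnp q hq hdq)
    -- pick a Sylow q-subgroup of M, mapped into G
    obtain ⟨S⟩ : Nonempty (Sylow q ↥M) := inferInstance
    set Q : Subgroup G := (S : Subgroup ↥M).map M.subtype with hQdef
    have hQM : Q ≤ M := Subgroup.map_subtype_le _
    have hQp : IsPGroup q Q := S.2.map M.subtype
    have hQind : ¬ q ∣ Q.index := by
      have h1 : Q.relIndex M * M.index = Q.index := Subgroup.relIndex_mul_index hQM
      have h2 : Q.relIndex M = (S : Subgroup ↥M).index := by
        rw [Subgroup.relIndex, Subgroup.subgroupOf, Subgroup.comap_map_eq_self_of_injective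
          M.subtype_injective]
      intro hdq
      rw [← h1] at hdq
      rcases (Nat.Prime.dvd_mul hq).mp hdq with h | h
      · rw [h2] at h
        exact S.not_dvd_index h
      · exact hMq h
    set Qn : Subgroup ↥N := Q.subgroupOf N with hQndef
    have hQnind : ¬ q ∣ Qn.index := fun hdq => hQind (hdq.trans (myRelindexDvd Q N))
    -- B₀ = X ∩ N inside N
    set B₀ : Subgroup ↥N := X.subgroupOf N with hB₀def
    -- K = U ⊔ (B₀ ⊓ V)
    have hKB : K = U ⊔ (B₀ ⊓ V) := by
      apply le_antisymm
      · rw [hKd]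
        apply sup_le _ le_sup_left
        apply le_trans _ le_sup_right
        apply le_inf _ inf_le_right
        intro y hy
        rw [Subgroup.mem_subgroupOf]
        exact ⟨Subgroup.mem_sup_left (hy.1 : (y : G) ∈ H), (hVGu hy.2 : (y : G) ∈ Gu)⟩
      · apply sup_le hUK
        intro y hy
        have hyB : y ∈ B₀ := hy.1
        have hyV : y ∈ V := hy.2
        rw [Subgroup.mem_subgroupOf, hXd, ← SetLike.mem_coe,
          Subgroup.mul_normal] at hyB
        obtain ⟨w, hw, g, hg, hwg⟩ := hyB
        have hwN : w ∈ N := hHN hw.1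
        have hgN : g ∈ N := by
          have : g = w⁻¹ * (y : G) := by rw [← hwg]; group
          rw [this]; exact mul_mem (inv_mem hwN) y.2
        have hgU : (⟨g, hgN⟩ : ↥N) ∈ U := hGlU (by rwa [Subgroup.mem_subgroupOf])
        have hyU : y = (⟨w, hwN⟩ : ↥N) * ⟨g, hgN⟩ := by
          ext; exact hwg.symm
        have hwV : (⟨w, hwN⟩ : ↥N) ∈ V := by
          have : (⟨w, hwN⟩ : ↥N) = y * (⟨g, hgN⟩ : ↥N)⁻¹ := by
            rw [hyU]; group
          rw [this]
          exact mul_mem hyV (inv_mem (hUV hgU))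
        have hwK : (⟨w, hwN⟩ : ↥N) ∈ K := by
          rw [hKd]
          apply Subgroup.mem_sup_left
          rw [Subgroup.mem_inf]
          refine ⟨?_, hwV⟩
          rw [Subgroup.mem_subgroupOf]
          exact hw.1
        rw [hyU]
        exact mul_mem hwK (hUK hgU)
    -- Qn normalizes K
    have hQnK : Qn ≤ (Subgroup.normalizer (K : Set ↥N)) := by
      intro x hx
      rw [Subgroup.mem_subgroupOf] at hx
      apply myNormalizerOfConjMapEq
      have hB : B₀.map (MulAut.conj x).toMonoidHom = B₀ := by
        ext z
        simp only [Subgroup.mem_map]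
        constructor
        · rintro ⟨u, hu, rfl⟩
          rw [Subgroup.mem_subgroupOf] at hu ⊢
          have : ((x : G) * u * (x : G)⁻¹) ∈ X :=
            (Subgroup.mem_normalizer_iff.mp (hQM hx) u).mp hu
          simpa [MulAut.conj] using this
        · intro hz
          refine ⟨x⁻¹ * z * x, ?_, by simp [MulAut.conj]; group⟩
          rw [Subgroup.mem_subgroupOf] at hz ⊢
          have := (Subgroup.mem_normalizer_iff.mp (hQM hx) ((x : G)⁻¹ * z * x)).mpr
          simp only [Subgroup.coe_mul, Subgroup.coe_inv]
          apply this
          have hcalc : (x : G) * ((x : G)⁻¹ * (z : G) * x) * (x : G)⁻¹ = z := by group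
          rwa [hcalc]
      rw [hKB, Subgroup.map_sup, Subgroup.map_inf, myMapConjEqOfNormal hUn,
        myMapConjEqOfNormal hVn, hB]
      exact (MulAut.conj x).injective
    have : (Subgroup.normalizer (K : Set ↥N)).index ∣ Qn.index := Subgroup.index_dvd_of_le hQnK
    exact hQnind (hqd.trans this)

lemma myEqOfLeCard {G : Type*} [Group G] [Finite G] {A B : Subgroup G}
    (h : A ≤ B) (hc : Nat.card B ≤ Nat.card A) : A = B := by
  have e1 : Nat.card A = (A : Set G).ncard := Nat.card_coe_set_eq _
  have e2 : Nat.card B = (B : Set G).ncard := Nat.card_coe_set_eq _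
  apply SetLike.coe_injective
  apply Set.eq_of_subset_of_ncard_le h
  rw [← e1, ← e2]
  exact hc

lemma myCardLt {G : Type*} [Group G] [Finite G] {A B : Subgroup G}
    (h : A < B) : Nat.card A < Nat.card B := by
  have e1 : Nat.card A = (A : Set G).ncard := Nat.card_coe_set_eq _
  have e2 : Nat.card B = (B : Set G).ncard := Nat.card_coe_set_eq _
  rw [e1, e2]
  refine Set.ncard_lt_ncard ?_ (Set.toFinite _)
  exact HasSubset.Subset.ssubset_of_ne (SetLike.coe_subset_coe.mpr h.le)
    (fun hh => h.ne (SetLike.coe_injective hh))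

lemma myChiefChain {G : Type*} [Group G] [Finite G] :
    ∀ (fuel : ℕ) (A B : Subgroup G), A.Normal → B.Normal → A ≤ B →
    Nat.card B - Nat.card A ≤ fuel →
    ∃ (k : ℕ) (e : ℕ → Subgroup G),
      e 0 = A ∧ e k = B ∧
      (∀ j, j ≤ k → (e j).Normal ∧ A ≤ e j ∧ e j ≤ B) ∧
      (∀ j, j < k → e j < e (j + 1)) ∧
      (∀ j, j < k → ∀ Z : Subgroup G, Z.Normal → e j ≤ Z → Z ≤ e (j + 1) →
        Z = e j ∨ Z = e (j + 1)) := by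
  intro fuel
  induction fuel with
  | zero =>
    intro A B hA hB hAB hfuel
    have : A = B := myEqOfLeCard hAB (by omega)
    subst this
    exact ⟨0, fun _ => A, rfl, rfl,
      fun j hj => ⟨hA, le_refl _, le_refl _⟩,
      fun j hj => absurd hj (Nat.not_lt_zero j),
      fun j hj => absurd hj (Nat.not_lt_zero j)⟩
  | succ fuel ih =>
    intro A B hA hB hAB hfuel
    rcases eq_or_lt_of_le hAB with rfl | hABlt
    · exact ⟨0, fun _ => A, rfl, rfl,
        fun j hj => ⟨hA, le_refl _, le_refl _⟩,
        fun j hj => absurd hj (Nat.not_lt_zero j),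
        fun j hj => absurd hj (Nat.not_lt_zero j)⟩
    · -- find a minimal normal subgroup W with A < W ≤ B
      set S : Set (Subgroup G) := {W | W.Normal ∧ A < W ∧ W ≤ B} with hSdef
      have hBS : B ∈ S := ⟨hB, hABlt, le_refl _⟩
      set T : Set ℕ := {m | ∃ W ∈ S, Nat.card W = m} with hTdef
      have hTne : T.Nonempty := ⟨Nat.card B, B, hBS, rfl⟩
      obtain ⟨W, hWS, hWcard⟩ : ∃ W ∈ S, Nat.card W = sInf T := Nat.sInf_mem hTne
      have hWmin : ∀ Z ∈ S, Z ≤ W → Z = W := by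
        intro Z hZ hZW
        apply myEqOfLeCard hZW
        rw [hWcard]
        exact Nat.sInf_le ⟨Z, hZ, rfl⟩
      obtain ⟨hWn, hAW, hWB⟩ := hWS
      have hdec : Nat.card B - Nat.card W ≤ fuel := by
        have h1 := myCardLt hAW
        have h2 : Nat.card W ≤ Nat.card B := Nat.le_of_lt_succ (Nat.lt_succ_of_le
          (Nat.card_le_card_of_injective _ (Set.inclusion_injective hWB)))
        omega
      obtain ⟨k', e', he0, hek, hbounds, hstrict, hchief⟩ := ih W B hWn hB hWB hdec
      refine ⟨k' + 1, fun j => if j = 0 then A else e' (j - 1), by simp, by simp [hek], ?_, ?_, ?_⟩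
      · intro j hj
        rcases Nat.eq_zero_or_pos j with rfl | hjpos
        · simp only [if_pos rfl]
          exact ⟨hA, le_refl _, hAB⟩
        · have hj' : j - 1 ≤ k' := by omega
          obtain ⟨hn, hl, hu⟩ := hbounds (j - 1) hj'
          simp only [Nat.pos_iff_ne_zero.mp hjpos, if_neg (Nat.pos_iff_ne_zero.mp hjpos)]
          exact ⟨hn, le_trans (le_of_lt hAW) hl, hu⟩
      · intro j hj
        rcases Nat.eq_zero_or_pos j with rfl | hjpos
        · simpa [he0] using hAW
        · have h1 : j ≠ 0 := Nat.pos_iff_ne_zero.mp hjpos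
          have h2 : j + 1 ≠ 0 := by omega
          simp only [if_neg h1, if_neg h2]
          have : j + 1 - 1 = (j - 1) + 1 := by omega
          rw [this]
          exact hstrict (j - 1) (by omega)
      · intro j hj Z hZn hZl hZu
        rcases Nat.eq_zero_or_pos j with rfl | hjpos
        · simp only [if_pos rfl] at hZl ⊢
          simp only [Nat.one_ne_zero, if_neg, he0] at hZu ⊢
          rcases eq_or_lt_of_le hZl with h | h
          · exact Or.inl h.symm
          · right
            exact hWmin Z ⟨hZn, h, le_trans hZu hWB⟩ hZu
        · have h1 : j ≠ 0 := Nat.pos_iff_ne_zero.mp hjpos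
          have h2 : j + 1 ≠ 0 := by omega
          simp only [if_neg h1, if_neg h2] at hZl hZu ⊢
          have h3 : j + 1 - 1 = (j - 1) + 1 := by omega
          rw [h3] at hZu ⊢
          exact hchief (j - 1) (by omega) Z hZn hZl hZu

end Helpers

/-- Let `H ≤ N ≤ G` with `N ⊴ G` and `H` a `p`-subgroup of the finite group `G`.
If `H` satisfies the partial `Π`-property in `G`, then `H` satisfies the partial
`Π`-property in `N`. -/
theorem partialPi_of_le_normal (G : Type) [Group G] [Finite G] (p : ℕ) [Fact p.Prime]
    (H N : Subgroup G) [N.Normal] (hHN : H ≤ N) (hH : IsPGroup p H)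
    (h : PartialPiProperty G H) :
    PartialPiProperty ↥N (H.subgroupOf N) := by
  obtain ⟨n, c, hc0, hcn, hnorm, hlt, _hchief, hdvd⟩ := h
  have hdn : ∀ i, i ≤ n → ((c i).subgroupOf N).Normal := fun i hi =>
    Subgroup.Normal.subgroupOf (hnorm i hi) N
  have main : ∀ i, i ≤ n → ∃ (k : ℕ) (e : ℕ → Subgroup ↥N),
      e 0 = ⊥ ∧ e k = (c i).subgroupOf N ∧
      (∀ j, j ≤ k → (e j).Normal) ∧
      (∀ j, j < k → e j < e (j + 1)) ∧
      (∀ j, j < k → ∀ Z : Subgroup ↥N, Z.Normal → e j ≤ Z → Z ≤ e (j + 1) →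
        Z = e j ∨ Z = e (j + 1)) ∧
      (∀ j, j < k → ∃ i', i' < n ∧ (c i').subgroupOf N ≤ e j ∧
        e (j + 1) ≤ (c (i' + 1)).subgroupOf N) := by
    intro i
    induction i with
    | zero =>
      intro _
      refine ⟨0, fun _ => ⊥, rfl, ?_, ?_, ?_, ?_, ?_⟩
      · rw [hc0, Subgroup.bot_subgroupOf]
      · intro j _; infer_instance
      · intro j hj; exact absurd hj (Nat.not_lt_zero j)
      · intro j hj; exact absurd hj (Nat.not_lt_zero j)
      · intro j hj; exact absurd hj (Nat.not_lt_zero j)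
    | succ i ih =>
      intro hi
      have hi' : i < n := hi
      obtain ⟨k1, e1, h10, h1k, h1n, h1s, h1c, h1slot⟩ := ih hi'.le
      obtain ⟨k2, e2, h20, h2k, h2b, h2s, h2c⟩ :=
        myChiefChain (Nat.card ((c (i + 1)).subgroupOf N)) ((c i).subgroupOf N)
          ((c (i + 1)).subgroupOf N) (hdn i hi'.le) (hdn (i + 1) hi)
          (Subgroup.comap_mono (hlt i hi').le) (Nat.sub_le _ _)
      have hjoin : e2 0 = e1 k1 := by rw [h20, h1k]
      refine ⟨k1 + k2, fun j => if j < k1 then e1 j else e2 (j - k1), ?_, ?_, ?_, ?_, ?_, ?_⟩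
      · by_cases h : 0 < k1
        · simpa [h] using h10
        · have : k1 = 0 := by omega
          simp only [this]
          simpa using h20.trans (by rw [← h1k, this, h10])
      · have : ¬ k1 + k2 < k1 := by omega
        simp only [this, if_false]
        simpa using h2k
      · intro j hj
        by_cases h : j < k1
        · simpa [h] using h1n j h.le
        · simp only [h, if_false]
          exact (h2b (j - k1) (by omega)).1
      · intro j hj
        by_cases h : j < k1
        · by_cases h' : j + 1 < k1
          · simpa [h, h'] using h1s j (by omega)
          · have hj1 : j + 1 = k1 := by omega
            simp only [h, if_true, h', if_false]
            have : e2 (j + 1 - k1) = e1 (j + 1) := by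
              rw [hj1, Nat.sub_self]; exact hjoin
            rw [this]
            exact h1s j (by omega)
        · have h' : ¬ j + 1 < k1 := by omega
          simp only [h, h', if_false]
          have : j + 1 - k1 = (j - k1) + 1 := by omega
          rw [this]
          exact h2s (j - k1) (by omega)
      · intro j hj Z hZn hZl hZu
        by_cases h : j < k1
        · by_cases h' : j + 1 < k1
          · simp only [h, if_true, h', if_true] at hZl hZu ⊢
            exact h1c j (by omega) Z hZn hZl hZu
          · have hj1 : j + 1 = k1 := by omega
            simp only [h, if_true, h', if_false] at hZl hZu ⊢
            have he : e2 (j + 1 - k1) = e1 (j + 1) := by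
              rw [hj1, Nat.sub_self]; exact hjoin
            rw [he] at hZu ⊢
            exact h1c j (by omega) Z hZn hZl hZu
        · have h' : ¬ j + 1 < k1 := by omega
          simp only [h, h', if_false] at hZl hZu ⊢
          have he : j + 1 - k1 = (j - k1) + 1 := by omega
          rw [he] at hZu ⊢
          exact h2c (j - k1) (by omega) Z hZn hZl hZu
      · intro j hj
        by_cases h : j < k1
        · obtain ⟨i', hi'n, hl, hu⟩ := h1slot j h
          refine ⟨i', hi'n, ?_, ?_⟩
          · simpa [h] using hl
          · by_cases h' : j + 1 < k1
            · simpa [h'] using hu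
            · have hj1 : j + 1 = k1 := by omega
              simp only [h', if_false]
              have : e2 (j + 1 - k1) = e1 (j + 1) := by
                rw [hj1, Nat.sub_self]; exact hjoin
              rw [this]
              exact hu
        · have h' : ¬ j + 1 < k1 := by omega
          refine ⟨i, hi', ?_, ?_⟩
          · simp only [h, if_false]
            exact (h2b (j - k1) (by omega)).2.1
          · simp only [h', if_false]
            have he : j + 1 - k1 = (j - k1) + 1 := by omega
            rw [he]
            exact (h2b ((j - k1) + 1) (by omega)).2.2
  obtain ⟨k, e, he0, hek, hn', hs', hc', hslot⟩ := main n le_rfl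
  refine ⟨k, e, he0, ?_, fun j hj => hn' j hj, hs', hc', ?_⟩
  · rw [hek, hcn, Subgroup.top_subgroupOf]
  · intro j hj q hq hqd'
    obtain ⟨i', hi'n, hl, hu⟩ := hslot j hj
    haveI : (c i').Normal := hnorm i' hi'n.le
    haveI : (c (i' + 1)).Normal := hnorm (i' + 1) hi'n
    exact myKey hHN hH (hlt i' hi'n).le (hdvd i' hi'n) (hn' j hj.le) (hn' (j + 1) hj)
      hl (hs' j hj).le hu q hq hqd'
end

section
/- Let H ≤ G and N ⊴ G in a finite group G. If N ≤ H and H satisfies the partial Π-property in G, then HN/N = H/N satisfies the partial Π-property in G/N. -/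
/-- Extract a strictly "stepping" chain from a chain that may repeat values. -/
theorem chain_extract' {α : Type*} (P : α → α → Prop) (d : ℕ → α) :
    ∀ n : ℕ, (∀ i < n, d i = d (i + 1) ∨ P (d i) (d (i + 1))) →
    ∃ (m : ℕ) (e : ℕ → α), e 0 = d 0 ∧ e m = d n ∧ ∀ k < m, P (e k) (e (k + 1)) := by
  intro n
  induction n with
  | zero => intro _; exact ⟨0, fun _ => d 0, rfl, rfl, by omega⟩
  | succ n ih =>
    intro hstep
    obtain ⟨m, e, he0, hem, hP⟩ := ih (fun i hi => hstep i (by omega))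
    rcases hstep n (by omega) with heq | hp
    · exact ⟨m, e, he0, hem.trans heq, hP⟩
    · refine ⟨m + 1, fun k => if k ≤ m then e k else d (n + 1), by simp [he0], by simp, ?_⟩
      intro k hk
      rcases lt_or_eq_of_le (Nat.lt_succ_iff.mp hk) with hkm | hkm
      · simpa [hkm.le, Nat.succ_le_of_lt hkm] using hP k hkm
      · subst hkm
        simpa [hem] using hp

theorem card_div_card_eq_relindex' {G : Type*} [Group G] [Finite G] {K L : Subgroup G}
    (h : K ≤ L) : Nat.card L / Nat.card K = K.relIndex L := by
  have h1 : Nat.card (K.subgroupOf L) = Nat.card K :=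
    Nat.card_congr (Subgroup.subgroupOfEquivOfLe h).toEquiv
  have h2 := Subgroup.card_mul_index (K.subgroupOf L)
  rw [h1] at h2
  rw [Subgroup.relIndex, ← h2, Nat.mul_div_cancel_left _ Nat.card_pos]

theorem map_inf_of_ker_le {G G' : Type*} [Group G] [Group G'] (f : G →* G')
    {A B : Subgroup G} (hA : f.ker ≤ A) :
    (A ⊓ B).map f = A.map f ⊓ B.map f := by
  refine le_antisymm (le_inf (Subgroup.map_mono inf_le_left)
    (Subgroup.map_mono inf_le_right)) ?_
  rintro x ⟨hxA, hxB⟩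
  obtain ⟨a, ha, rfl⟩ := hxA
  obtain ⟨b, hb, hba⟩ := hxB
  have hab : a⁻¹ * b ∈ f.ker := by
    rw [MonoidHom.mem_ker, map_mul, map_inv, hba, inv_mul_cancel]
  have hbA : b ∈ A := by
    have := A.mul_mem ha (hA hab)
    simpa using this
  exact ⟨b, ⟨hbA, hb⟩, hba⟩


/-- Let `H ≤ G` and `N ⊴ G` with `N ≤ H` in the finite group `G`. If `H` satisfies the
partial `Π`-property in `G`, then `HN/N = H/N` satisfies the partial `Π`-property in
`G/N`. -/
theorem partialPi_quotient_of_le (G : Type) [Group G] [Finite G]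
    (H N : Subgroup G) [N.Normal] (hNH : N ≤ H) (h : PartialPiProperty G H) :
    PartialPiProperty (G ⧸ N) (H.map (QuotientGroup.mk' N)) := by
  classical
  obtain ⟨n, c, hc0, hcn, hnorm, hlt, hchief, hind⟩ := h
  set π : G →* G ⧸ N := QuotientGroup.mk' N with hπ
  have hπs : Function.Surjective π := QuotientGroup.mk'_surjective N
  have hker : π.ker = N := QuotientGroup.ker_mk' N
  have hmapN : N.map π = ⊥ := by
    rw [eq_bot_iff]
    rintro x ⟨a, ha, rfl⟩
    rw [Subgroup.mem_bot, hπ, QuotientGroup.mk'_apply, QuotientGroup.eq_one_iff]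
    exact ha
  set H' : Subgroup (G ⧸ N) := H.map π with hH'
  set d : ℕ → Subgroup (G ⧸ N) := fun i => (c i).map π with hd
  set P : Subgroup (G ⧸ N) → Subgroup (G ⧸ N) → Prop := fun a b =>
    a.Normal ∧ b.Normal ∧ a < b ∧
    (∀ X : Subgroup (G ⧸ N), X.Normal → a ≤ X → X ≤ b → X = a ∨ X = b) ∧
    (∀ q : ℕ, q.Prime → q ∣ (Subgroup.normalizer (((H' ⊔ a) ⊓ b : Subgroup (G ⧸ N)) : Set (G ⧸ N))).index →
      q ∣ Nat.card ((H' ⊔ a) ⊓ b : Subgroup (G ⧸ N)) / Nat.card a) with hPdef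
  have hstep : ∀ i < n, d i = d (i + 1) ∨ P (d i) (d (i + 1)) := by
    intro i hi
    by_cases hde : d i = d (i + 1)
    · exact Or.inl hde
    right
    haveI hci : (c i).Normal := hnorm i (le_of_lt hi)
    haveI hci1 : (c (i + 1)).Normal := hnorm (i + 1) hi
    have f1 : d i ≤ d (i + 1) := Subgroup.map_mono (hlt i hi).le
    have f2 : d i < d (i + 1) := f1.lt_of_ne hde
    -- key fact : (N ⊔ c i) ⊓ c (i+1) = c i
    have f3 : (N ⊔ c i) ⊓ c (i + 1) = c i := by
      rcases hchief i hi ((N ⊔ c i) ⊓ c (i + 1)) inferInstance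
          (le_inf (le_sup_right) (hlt i hi).le) inf_le_right with hZ | hZ
      · exact hZ
      · exfalso
        have hle : c (i + 1) ≤ N ⊔ c i := by
          rw [← hZ]; exact inf_le_left
        have : d (i + 1) ≤ d i := by
          have h2 := Subgroup.map_mono (f := π) hle
          rwa [Subgroup.map_sup, hmapN, bot_sup_eq] at h2
        exact absurd this (not_le_of_gt f2)
    have hdin : (d i).Normal := (hnorm i (le_of_lt hi)).map π hπs
    have hdi1n : (d (i + 1)).Normal := (hnorm (i + 1) hi).map π hπs
    refine ⟨hdin, hdi1n, f2, ?_, ?_⟩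
    · -- chief factor condition
      intro X hX hXa hXb
      set Y : Subgroup G := X.comap π with hY
      haveI hYn : Y.Normal := hX.comap π
      have hNY : N ≤ Y := by
        intro x hx
        have hx1 : π x = 1 := by
          rw [hπ, QuotientGroup.mk'_apply, QuotientGroup.eq_one_iff]; exact hx
        simp only [hY, Subgroup.mem_comap, hx1]
        exact X.one_mem
      have hY1 : c i ≤ Y := le_trans (Subgroup.le_comap_map (f := π) (c i)) (Subgroup.comap_mono hXa)
      have hY2 : Y ≤ N ⊔ c (i + 1) := by
        have h2 := Subgroup.comap_mono (f := π) hXb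
        simp only [hd] at h2
        rw [Subgroup.comap_map_eq, hker, sup_comm] at h2
        exact h2
      have hmapY : Y.map π = X := Subgroup.map_comap_eq_self_of_surjective hπs X
      rcases hchief i hi (Y ⊓ c (i + 1)) inferInstance
          (le_inf hY1 (hlt i hi).le) inf_le_right with hZ | hZ
      · -- X = d i
        left
        have hYle : Y ≤ N ⊔ c i := by
          intro y hy
          have hy2 : y ∈ (↑(N ⊔ c (i + 1)) : Set G) := hY2 hy
          rw [Subgroup.normal_mul, Set.mem_mul] at hy2
          obtain ⟨a, ha, b, hb, rfl⟩ := hy2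
          have hbY : b ∈ Y := by
            have := Y.mul_mem (Y.inv_mem (hNY ha)) hy
            simpa using this
          have hbci : b ∈ c i := by
            rw [← hZ]; exact ⟨hbY, hb⟩
          rw [← SetLike.mem_coe, Subgroup.normal_mul]
          exact ⟨a, ha, b, hbci, rfl⟩
        have hXle : X ≤ d i := by
          have h2 := Subgroup.map_mono (f := π) hYle
          rwa [hmapY, Subgroup.map_sup, hmapN, bot_sup_eq] at h2
        exact le_antisymm hXle hXa
      · -- X = d (i+1)
        right
        have hci1Y : c (i + 1) ≤ Y := hZ.symm.le.trans inf_le_left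
        have : d (i + 1) ≤ X := by
          have h2 := Subgroup.map_mono (f := π) hci1Y
          rwa [hmapY] at h2
        exact le_antisymm hXb this
    · -- index condition
      intro q hq hqdvd
      have hNA : N ≤ H ⊔ c i := hNH.trans le_sup_left
      have hNA' : π.ker ≤ H ⊔ c i := by rw [hker]; exact hNA
      have hDeq : (H' ⊔ d i) ⊓ d (i + 1) = ((H ⊔ c i) ⊓ c (i + 1)).map π := by
        simp only [hH', hd]
        rw [← Subgroup.map_sup, map_inf_of_ker_le π hNA']
      set D : Subgroup G := (H ⊔ c i) ⊓ c (i + 1) with hD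
      rw [hDeq] at hqdvd ⊢
      have hdvd1 : (Subgroup.normalizer ((D.map π : Subgroup (G ⧸ N)) : Set (G ⧸ N))).index ∣
            (Subgroup.normalizer (D : Set G)).index :=
        dvd_trans (Subgroup.index_dvd_of_le (Subgroup.le_normalizer_map π))
          ((Subgroup.normalizer (D : Set G)).index_map_dvd hπs)
      have hq2 : q ∣ Nat.card D / Nat.card (c i) :=
        hind i hi q hq (hqdvd.trans hdvd1)
      have hciD : c i ≤ D := le_inf le_sup_right (hlt i hi).le
      have hcards : Nat.card (D.map π) / Nat.card ((c i).map π)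
          = Nat.card D / Nat.card (c i) := by
        rw [card_div_card_eq_relindex' (Subgroup.map_mono hciD),
          card_div_card_eq_relindex' hciD, ← Subgroup.relIndex_comap,
          Subgroup.comap_map_eq, hker, ← Subgroup.inf_relIndex_right, sup_comm]
        congr 1
        calc (N ⊔ c i) ⊓ D = (H ⊔ c i) ⊓ ((N ⊔ c i) ⊓ c (i + 1)) := by
              rw [hD, inf_left_comm]
          _ = (H ⊔ c i) ⊓ c i := by rw [f3]
          _ = c i := inf_eq_right.mpr le_sup_right
      show q ∣ Nat.card (D.map π) / Nat.card (d i)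
      simp only [hd]
      rw [hcards]
      exact hq2
  obtain ⟨m, e, he0, hem, hP⟩ := chain_extract' P d n hstep
  have he0' : e 0 = ⊥ := by
    rw [he0]; simp only [hd]; rw [hc0, Subgroup.map_bot]
  have hem' : e m = ⊤ := by
    rw [hem]; simp only [hd]; rw [hcn]
    exact Subgroup.map_top_of_surjective π hπs
  refine ⟨m, e, he0', hem', ?_, ?_, ?_, ?_⟩
  · intro i hi
    rcases lt_or_eq_of_le hi with hlt' | heq
    · exact (hP i hlt').1
    · rw [heq, hem']; exact ⟨fun x _ g => Subgroup.mem_top _⟩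
  · intro i hi; exact (hP i hi).2.2.1
  · intro i hi; exact (hP i hi).2.2.2.1
  · intro i hi; exact (hP i hi).2.2.2.2
end

section
/- Let H ≤ G and N ⊴ G in a finite group G with gcd(|H|, |N|) = 1. If H satisfies the partial Π-property in G, then HN/N satisfies the partial Π-property in G/N. -/
open Subgroup

section PartialPiHelpers

/-- Compress a chain: drop the trivial steps, keeping only "Pair" steps. -/
private lemma partialPi_chain_compress {α : Type*} (Pair : α → α → Prop) :
    ∀ (n : ℕ) (d : ℕ → α), (∀ i, i < n → d i = d (i + 1) ∨ Pair (d i) (d (i + 1))) →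
      ∃ (m : ℕ) (e : ℕ → α), e 0 = d 0 ∧ e m = d n ∧ ∀ k, k < m → Pair (e k) (e (k + 1)) := by
  intro n
  induction n with
  | zero => exact fun d _ => ⟨0, d, rfl, rfl, fun k hk => absurd hk (Nat.not_lt_zero k)⟩
  | succ n ih =>
    intro d hd
    obtain ⟨m, e, he0, hem, hpair⟩ := ih (fun i => d (i + 1))
      (fun i hi => hd (i + 1) (Nat.succ_lt_succ hi))
    rcases hd 0 (Nat.succ_pos n) with h0 | h0
    · exact ⟨m, e, by rw [he0, h0], hem, hpair⟩
    · refine ⟨m + 1, fun k => if k = 0 then d 0 else e (k - 1), if_pos rfl, ?_, ?_⟩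
      · simp only [Nat.succ_ne_zero, if_false, Nat.add_sub_cancel]
        exact hem
      · intro k hk
        match k with
        | 0 => simpa [he0] using h0
        | (j + 1) =>
          simp only [Nat.succ_ne_zero, if_false, Nat.add_sub_cancel]
          exact hpair j (Nat.lt_of_succ_lt_succ hk)

variable {G Q : Type*} [Group G] [Group Q]

private lemma partialPi_card_map_mul (φ : G →* Q) (K : Subgroup G) :
    Nat.card (K.map φ) * Nat.card (φ.ker ⊓ K : Subgroup G) = Nat.card K := by
  set f := φ.comp K.subtype with hf
  have hrange : f.range = K.map φ := by
    ext y
    constructor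
    · rintro ⟨⟨x, hx⟩, rfl⟩; exact ⟨x, hx, rfl⟩
    · rintro ⟨x, hx, rfl⟩; exact ⟨⟨x, hx⟩, rfl⟩
  have hker : f.ker = (φ.ker ⊓ K).subgroupOf K := by
    ext x
    simp [MonoidHom.mem_ker, Subgroup.mem_subgroupOf, f, SetLike.coe_mem]
  have h1 : Nat.card K = Nat.card (K ⧸ f.ker) * Nat.card f.ker :=
    Subgroup.card_eq_card_quotient_mul_card_subgroup f.ker
  have h2 : Nat.card (K ⧸ f.ker) = Nat.card (K.map φ) := by
    rw [← hrange]
    exact Nat.card_congr (QuotientGroup.quotientKerEquivRange f).toEquiv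
  have h3 : Nat.card f.ker = Nat.card (φ.ker ⊓ K : Subgroup G) := by
    rw [hker]
    exact Nat.card_congr (Subgroup.subgroupOfEquivOfLe inf_le_right).toEquiv
  rw [h1, h2, h3]

private lemma partialPi_card_map_dvd (φ : G →* Q) (K : Subgroup G) :
    Nat.card (K.map φ) ∣ Nat.card K :=
  ⟨_, (partialPi_card_map_mul φ K).symm⟩

private lemma partialPi_le_of_coprime (M D : Subgroup G) [M.Normal] {a b : ℕ}
    (hab : Nat.Coprime a b) (ha : Nat.card D ∣ a)
    (hb : Nat.card (D.map (QuotientGroup.mk' M)) ∣ b) : D ≤ M := by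
  have h1 : Nat.card (D.map (QuotientGroup.mk' M)) ∣ a :=
    dvd_trans (partialPi_card_map_dvd _ _) ha
  have h2 : Nat.card (D.map (QuotientGroup.mk' M)) ∣ Nat.gcd a b := Nat.dvd_gcd h1 hb
  rw [hab] at h2
  have h3 : D.map (QuotientGroup.mk' M) = ⊥ :=
    Subgroup.card_eq_one.mp (Nat.eq_one_of_dvd_one h2)
  rw [Subgroup.map_eq_bot_iff, QuotientGroup.ker_mk'] at h3
  exact h3

private lemma partialPi_mem_sup {K L : Subgroup G} [L.Normal] {x : G} (hx : x ∈ K ⊔ L) :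
    ∃ k ∈ K, ∃ l ∈ L, k * l = x := by
  have h : x ∈ (↑(K ⊔ L) : Set G) := hx
  rw [Subgroup.mul_normal K L] at h
  exact Set.mem_mul.mp h

private lemma partialPi_dedekind (X K N : Subgroup G) [N.Normal] (hNX : N ≤ X) :
    X ⊓ (K ⊔ N) = (X ⊓ K) ⊔ N := by
  apply le_antisymm
  · rintro x ⟨hxX, hxKN⟩
    obtain ⟨k, hk, l, hl, rfl⟩ := partialPi_mem_sup hxKN
    have hkX : k ∈ X := by
      have : (k * l) * l⁻¹ ∈ X := mul_mem hxX (inv_mem (hNX hl))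
      simpa using this
    exact mul_mem (Subgroup.mem_sup_left ⟨hkX, hk⟩) (Subgroup.mem_sup_right hl)
  · exact sup_le (le_inf inf_le_left (inf_le_right.trans le_sup_left)) (le_inf hNX le_sup_right)

end PartialPiHelpers



/-- Let `H ≤ G` and `N ⊴ G` with `gcd(|H|, |N|) = 1` in the finite group `G`. If `H`
satisfies the partial `Π`-property in `G`, then `HN/N` satisfies the partial
`Π`-property in `G/N`. -/
theorem partialPi_quotient_of_coprime (G : Type) [Group G] [Finite G]
    (H N : Subgroup G) [N.Normal] (hcop : Nat.Coprime (Nat.card H) (Nat.card N))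
    (h : PartialPiProperty G H) :
    PartialPiProperty (G ⧸ N) (H.map (QuotientGroup.mk' N)) := by
  obtain ⟨n, c, hc0, hcn, hnorm, hlt, hchief, hpi⟩ := h
  have hφs : Function.Surjective (QuotientGroup.mk' N) := QuotientGroup.mk'_surjective N
  set φ : G →* G ⧸ N := QuotientGroup.mk' N with hφdef
  have hker : φ.ker = N := QuotientGroup.ker_mk' N
  have hNbot : N.map φ = ⊥ := (Subgroup.map_eq_bot_iff _).mpr hker.ge
  set H' : Subgroup (G ⧸ N) := H.map φ with hH'
  set d : ℕ → Subgroup (G ⧸ N) := fun i => (c i).map φ with hd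
  set Pair : Subgroup (G ⧸ N) → Subgroup (G ⧸ N) → Prop := fun K L =>
    K < L ∧ L.Normal ∧
    (∀ X : Subgroup (G ⧸ N), X.Normal → K ≤ X → X ≤ L → X = K ∨ X = L) ∧
    (∀ q : ℕ, q.Prime → q ∣ (Subgroup.normalizer (((H' ⊔ K) ⊓ L : Subgroup (G ⧸ N)) : Set (G ⧸ N))).index →
      q ∣ Nat.card ((H' ⊔ K) ⊓ L : Subgroup (G ⧸ N)) / Nat.card K) with hPairdef
  have key : ∀ i, i < n → d i = d (i + 1) ∨ Pair (d i) (d (i + 1)) := by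
    intro i hi
    have hci : c i < c (i + 1) := hlt i hi
    have hmono : d i ≤ d (i + 1) := Subgroup.map_mono hci.le
    rcases eq_or_lt_of_le hmono with heq | hlt'
    · exact Or.inl heq
    right
    haveI hCi : (c i).Normal := hnorm i hi.le
    haveI hCj : (c (i + 1)).Normal := hnorm (i + 1) hi
    set Ci := c i with hCidef
    set Cj := c (i + 1) with hCjdef
    set A : Subgroup G := (H ⊔ Ci) ⊓ Cj with hAdef
    have hCiA : Ci ≤ A := le_inf le_sup_right hci.le
    -- A = (H ⊓ Cj) ⊔ Ci
    have hA1 : A = (H ⊓ Cj) ⊔ Ci := by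
      apply le_antisymm
      · rintro x ⟨hx1, hx2⟩
        obtain ⟨k, hk, l, hl, rfl⟩ := partialPi_mem_sup hx1
        have hkCj : k ∈ Cj := by
          have : (k * l) * l⁻¹ ∈ Cj := mul_mem hx2 (inv_mem (hci.le hl))
          simpa using this
        exact mul_mem (Subgroup.mem_sup_left ⟨hk, hkCj⟩) (Subgroup.mem_sup_right hl)
      · exact sup_le (le_inf (inf_le_left.trans le_sup_left) inf_le_right)
          (le_inf le_sup_right hci.le)
    -- coprimality: H ⊓ (Cj ⊔ N) ≤ Cj
    have h2 : H ⊓ (Cj ⊔ N) ≤ Cj := by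
      apply partialPi_le_of_coprime Cj _ hcop (Subgroup.card_dvd_of_le inf_le_left)
      have hle : (H ⊓ (Cj ⊔ N)).map (QuotientGroup.mk' Cj) ≤
          N.map (QuotientGroup.mk' Cj) := by
        have h1 : (H ⊓ (Cj ⊔ N)).map (QuotientGroup.mk' Cj) ≤
            (Cj ⊔ N).map (QuotientGroup.mk' Cj) := Subgroup.map_mono inf_le_right
        rwa [Subgroup.map_sup, (Subgroup.map_eq_bot_iff _).mpr (QuotientGroup.ker_mk' Cj).ge,
          bot_sup_eq] at h1
      exact dvd_trans (Subgroup.card_dvd_of_le hle) (partialPi_card_map_dvd _ _)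
    -- the intersection identity
    have h3 : ((H ⊔ Ci) ⊔ N) ⊓ (Cj ⊔ N) = A ⊔ N := by
      apply le_antisymm
      · rintro x ⟨hx1, hx2⟩
        rw [sup_assoc] at hx1
        obtain ⟨k, hk, l, hl, rfl⟩ := partialPi_mem_sup hx1
        have hkCjN : k ∈ Cj ⊔ N := by
          have : (k * l) * l⁻¹ ∈ Cj ⊔ N :=
            mul_mem hx2 (inv_mem ((sup_le_sup_right hci.le N) hl))
          simpa using this
        have hkA : k ∈ A := ⟨Subgroup.mem_sup_left hk, h2 ⟨hk, hkCjN⟩⟩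
        have hlAN : l ∈ A ⊔ N := (sup_le_sup_right hCiA N) hl
        exact mul_mem (Subgroup.mem_sup_left hkA) hlAN
      · exact sup_le (le_inf (inf_le_left.trans le_sup_left) (inf_le_right.trans le_sup_left))
          (le_inf le_sup_right le_sup_right)
    -- image of A is the intersection in the quotient
    have h4 : (H' ⊔ d i) ⊓ d (i + 1) = A.map φ := by
      calc (H' ⊔ d i) ⊓ d (i + 1)
          = ((H ⊔ Ci).map φ) ⊓ (Cj.map φ) := by rw [Subgroup.map_sup]
        _ = (((H ⊔ Ci).map φ ⊓ Cj.map φ).comap φ).map φ :=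
            (Subgroup.map_comap_eq_self_of_surjective hφs _).symm
        _ = (((H ⊔ Ci) ⊔ N) ⊓ (Cj ⊔ N)).map φ := by
            rw [Subgroup.comap_inf, Subgroup.comap_map_eq, Subgroup.comap_map_eq, hker]
        _ = (A ⊔ N).map φ := by rw [h3]
        _ = A.map φ := by rw [Subgroup.map_sup, hNbot, sup_bot_eq]
    refine ⟨hlt', Subgroup.Normal.map hCj φ hφs, ?_, ?_⟩
    · -- chief factor condition in the quotient
      intro X hX hX1 hX2
      haveI := hX
      set Y := X.comap φ with hYdef
      haveI hYn : Y.Normal := Subgroup.normal_comap φ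
      have hY1 : Ci ⊔ N ≤ Y := by
        have hcm := Subgroup.comap_mono (f := φ) hX1
        rwa [Subgroup.comap_map_eq, hker] at hcm
      have hY2 : Y ≤ Cj ⊔ N := by
        have hcm := Subgroup.comap_mono (f := φ) hX2
        rwa [Subgroup.comap_map_eq, hker] at hcm
      have hstep : (Ci ⊔ N) ⊓ Cj = Ci := by
        rcases hchief i hi ((Ci ⊔ N) ⊓ Cj) inferInstance
            (le_inf le_sup_left hci.le) inf_le_right with hq | hq
        · exact hq
        · exfalso
          have hCjle : Cj ≤ Ci ⊔ N := by
            have h' := inf_le_left (a := Ci ⊔ N) (b := Cj)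
            rwa [hq] at h'
          have hcontr : d (i + 1) ≤ d i := by
            have h' : Cj.map φ ≤ (Ci ⊔ N).map φ := Subgroup.map_mono hCjle
            rwa [Subgroup.map_sup, hNbot, sup_bot_eq] at h'
          exact absurd hcontr (not_le_of_gt hlt')
      rcases hchief i hi (Y ⊓ Cj) inferInstance
          (by show Ci ≤ Y ⊓ Cj; rw [← hstep]; exact inf_le_inf_right Cj hY1)
          inf_le_right with hZ | hZ
      · -- X = d i
        left
        have hNY : N ≤ Y := le_sup_right.trans hY1
        have hYeq : Y = Ci ⊔ N := by
          have hded := partialPi_dedekind Y Cj N hNY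
          rw [inf_eq_left.mpr hY2] at hded
          rw [hded, hZ]
        have hXY : X = Y.map φ := (Subgroup.map_comap_eq_self_of_surjective hφs X).symm
        rw [hXY, hYeq, Subgroup.map_sup, hNbot, sup_bot_eq]
      · -- X = d (i + 1)
        right
        have hCjY : Cj ≤ Y := by
          have h' := inf_le_left (a := Y) (b := Cj)
          rwa [hZ] at h'
        have hYeq : Y = Cj ⊔ N := le_antisymm hY2 (sup_le hCjY (le_sup_right.trans hY1))
        have hXY : X = Y.map φ := (Subgroup.map_comap_eq_self_of_surjective hφs X).symm
        rw [hXY, hYeq, Subgroup.map_sup, hNbot, sup_bot_eq]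
    · -- π-condition in the quotient
      intro q hq hqdvd
      rw [h4] at hqdvd
      have hdvd1 : (Subgroup.normalizer ((A.map φ : Subgroup (G ⧸ N)) : Set (G ⧸ N))).index ∣
          ((Subgroup.normalizer (A : Set G)).map φ).index :=
        Subgroup.index_dvd_of_le (Subgroup.le_normalizer_map φ)
      have hdvd2 : ((Subgroup.normalizer (A : Set G)).map φ).index ∣
          (Subgroup.normalizer (A : Set G)).index :=
        (Subgroup.normalizer (A : Set G)).index_map_dvd hφs
      have hqA : q ∣ Nat.card A / Nat.card Ci :=
        hpi i hi q hq (hqdvd.trans (hdvd1.trans hdvd2))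
      -- A ⊓ N = Ci ⊓ N  (coprimality)
      have h5 : A ⊓ N = Ci ⊓ N := by
        apply le_antisymm
        · refine le_inf ?_ inf_le_right
          apply partialPi_le_of_coprime Ci (A ⊓ N) hcop.symm
            (Subgroup.card_dvd_of_le inf_le_right)
          have hle : (A ⊓ N).map (QuotientGroup.mk' Ci) ≤
              (H ⊓ Cj).map (QuotientGroup.mk' Ci) := by
            have h1 : (A ⊓ N).map (QuotientGroup.mk' Ci) ≤
                ((H ⊓ Cj) ⊔ Ci).map (QuotientGroup.mk' Ci) := by
              rw [← hA1]; exact Subgroup.map_mono inf_le_left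
            rwa [Subgroup.map_sup,
              (Subgroup.map_eq_bot_iff _).mpr (QuotientGroup.ker_mk' Ci).ge, sup_bot_eq] at h1
          exact dvd_trans (Subgroup.card_dvd_of_le hle)
            (dvd_trans (partialPi_card_map_dvd _ _) (Subgroup.card_dvd_of_le inf_le_left))
        · exact inf_le_inf_right N hCiA
      have hkeq : (φ.ker ⊓ A : Subgroup G) = φ.ker ⊓ Ci := by
        rw [hker, inf_comm (a := N) (b := A), h5, inf_comm (a := Ci) (b := N)]
      have hkpos : 0 < Nat.card (φ.ker ⊓ Ci : Subgroup G) := Nat.card_pos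
      have hcardA : Nat.card A = Nat.card (A.map φ) * Nat.card (φ.ker ⊓ Ci : Subgroup G) := by
        rw [← partialPi_card_map_mul φ A, hkeq]
      have hcardCi : Nat.card Ci =
          Nat.card (Ci.map φ) * Nat.card (φ.ker ⊓ Ci : Subgroup G) :=
        (partialPi_card_map_mul φ Ci).symm
      rw [h4]
      have hfinal : Nat.card (A.map φ) / Nat.card (d i) = Nat.card A / Nat.card Ci := by
        show Nat.card (A.map φ) / Nat.card (Ci.map φ) = Nat.card A / Nat.card Ci
        rw [hcardA, hcardCi, Nat.mul_div_mul_right _ _ hkpos]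
      rw [hfinal]
      exact hqA
  obtain ⟨m, e, he0, hem, hp⟩ := partialPi_chain_compress Pair n d key
  have he0' : e 0 = ⊥ := by
    rw [he0]
    show (c 0).map φ = ⊥
    rw [hc0, Subgroup.map_bot]
  have hem' : e m = ⊤ := by
    rw [hem]
    show (c n).map φ = ⊤
    rw [hcn]
    exact Subgroup.map_top_of_surjective φ hφs
  refine ⟨m, e, he0', hem', ?_, fun k hk => (hp k hk).1, fun k hk => (hp k hk).2.2.1,
    fun k hk => (hp k hk).2.2.2⟩
  intro i hi
  match i with
  | 0 =>
    rw [he0']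
    infer_instance
  | (j + 1) =>
    exact (hp j hi).2.1
end

section
/- Let H be a normal subgroup of a finite group G, P a Sylow p-subgroup of H, and K a normal p'-subgroup of G. If every maximal subgroup of P satisfies the partial Π-property in N_G(P), then every maximal subgroup of PK/K satisfies the partial Π-property in N_{G/K}(PK/K). -/
open Subgroup Pointwise

section Helpers

variable {L : Type} [Group L]

lemma PPaux.mem_sup_normal {H K : Subgroup L} (hK : K.Normal) {x : L} (hx : x ∈ H ⊔ K) :
    ∃ h ∈ H, ∃ k ∈ K, h * k = x := by
  haveI := hK
  have hx' : x ∈ (↑(H ⊔ K) : Set L) := hx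
  rw [Subgroup.mul_normal] at hx'
  exact Set.mem_mul.mp hx'

lemma PPaux.card_eq_card_map_mul {N : Type} [Group N] [Finite L] (φ : L →* N) (W : Subgroup L) :
    Nat.card W = Nat.card (W.map φ) * Nat.card (φ.ker ⊓ W : Subgroup L) := by
  have h1 := Subgroup.relIndex_mul_relIndex (⊥ : Subgroup L) (φ.ker ⊓ W) W bot_le inf_le_right
  rw [Subgroup.relIndex_bot_left, Subgroup.relIndex_bot_left, Subgroup.inf_relIndex_right,
    Subgroup.relIndex_ker] at h1
  rw [← h1, mul_comm]

lemma PPaux.orderOf_dvd_card_of_mem {H : Subgroup L} {x : L} (hx : x ∈ H) :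
    orderOf x ∣ Nat.card H := by
  rw [← Subgroup.orderOf_mk x hx]
  exact orderOf_dvd_natCard _

lemma PPaux.map_mk'_self (c : Subgroup L) [c.Normal] :
    c.map (QuotientGroup.mk' c) = ⊥ :=
  (Subgroup.map_eq_bot_iff c).mpr (le_of_eq (QuotientGroup.ker_mk' c).symm)

lemma PPaux.card_map_dvd {N : Type} [Group N] [Finite L] (φ : L →* N) (W : Subgroup L) :
    Nat.card (W.map φ) ∣ Nat.card W :=
  ⟨Nat.card (φ.ker ⊓ W : Subgroup L), PPaux.card_eq_card_map_mul φ W⟩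

/-- an element that lies in a `p`-subgroup and in a `p'`-subgroup is trivial. -/
lemma PPaux.eq_one_of_mem_p_pPrime [Finite L] {p : ℕ} (hp : p.Prime) {U V : Subgroup L}
    {k : ℕ} (hU : Nat.card U = p ^ k) (hV : ¬ p ∣ Nat.card V) {x : L}
    (hxU : x ∈ U) (hxV : x ∈ V) : x = 1 := by
  have h1 : orderOf x ∣ p ^ k := hU ▸ PPaux.orderOf_dvd_card_of_mem hxU
  have h2 : orderOf x ∣ Nat.card V := PPaux.orderOf_dvd_card_of_mem hxV
  have hco : Nat.Coprime (p ^ k) (Nat.card V) :=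
    Nat.Coprime.pow_left _ ((Nat.Prime.coprime_iff_not_dvd hp).mpr hV)
  have h3 : orderOf x = 1 := Nat.Coprime.eq_one_of_dvd (Nat.Coprime.coprime_dvd_left h1 hco) h2
  rwa [orderOf_eq_one_iff] at h3

/-- `(A ⊔ c) ⊓ (c ⊔ K) = c` when `A` is a `p`-group, `K` a normal `p'`-group, `c` normal. -/
lemma PPaux.key_inf_eq [Finite L] {p : ℕ} [Fact p.Prime] (A c K : Subgroup L)
    (hA : IsPGroup p A) (hc : c.Normal) (hK : K.Normal) (hKp : ¬ p ∣ Nat.card K) :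
    (A ⊔ c) ⊓ (c ⊔ K) = c := by
  haveI := hc
  refine le_antisymm ?_ (le_inf le_sup_right le_sup_left)
  rintro x ⟨hx1, hx2⟩
  set ψ := QuotientGroup.mk' c with hψ
  have hm1 : ψ x ∈ A.map ψ := by
    have := Subgroup.mem_map_of_mem ψ hx1
    rwa [Subgroup.map_sup, PPaux.map_mk'_self, sup_bot_eq] at this
  have hm2 : ψ x ∈ K.map ψ := by
    have := Subgroup.mem_map_of_mem ψ hx2
    rwa [Subgroup.map_sup, PPaux.map_mk'_self, bot_sup_eq] at this
  obtain ⟨k, hk⟩ := IsPGroup.iff_card.mp (hA.map ψ)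
  have hKcard : ¬ p ∣ Nat.card (K.map ψ) := fun hdvd => hKp (hdvd.trans (PPaux.card_map_dvd ψ K))
  have : ψ x = 1 := PPaux.eq_one_of_mem_p_pPrime (Fact.out) hk hKcard hm1 hm2
  rwa [← QuotientGroup.eq_one_iff x]

/-- the key structural identity for a chief factor `c'/c`. -/
lemma PPaux.key_inf_sup_eq [Finite L] {p : ℕ} [Fact p.Prime] (A c c' K : Subgroup L)
    (hA : IsPGroup p A) (hc : c.Normal) (hc' : c'.Normal) (hK : K.Normal)
    (hKp : ¬ p ∣ Nat.card K) (hcc' : c ≤ c')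
    (hchief : ∀ X : Subgroup L, X.Normal → c ≤ X → X ≤ c' → X = c ∨ X = c') :
    (A ⊔ c ⊔ K) ⊓ (c' ⊔ K) = ((A ⊔ c) ⊓ c') ⊔ K := by
  haveI := hc; haveI := hc'; haveI := hK
  have hcD : c ≤ (A ⊔ c) ⊓ c' := le_inf le_sup_right hcc'
  have heasy : ((A ⊔ c) ⊓ c') ⊔ K ≤ (A ⊔ c ⊔ K) ⊓ (c' ⊔ K) := by
    apply sup_le
    · apply le_inf
      · exact le_trans inf_le_left le_sup_left
      · exact le_trans inf_le_right le_sup_left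
    · exact le_inf le_sup_right le_sup_right
  refine le_antisymm ?_ heasy
  have hWnormal : (c' ⊓ (c ⊔ K)).Normal := inferInstance
  rcases hchief (c' ⊓ (c ⊔ K)) hWnormal (le_inf hcc' le_sup_left) inf_le_left with hW | hW
  · -- W = c
    rintro x ⟨hx1, hx2⟩
    obtain ⟨u, hu, k₁, hk₁, huk⟩ := PPaux.mem_sup_normal hK hx1
    obtain ⟨v, hv, k₂, hk₂, hvk⟩ := PPaux.mem_sup_normal hK hx2
    set ψ := QuotientGroup.mk' c with hψdef
    have hdisj : c'.map ψ ⊓ K.map ψ = ⊥ := by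
      rw [eq_bot_iff]
      rintro z ⟨hz1, hz2⟩
      obtain ⟨v₀, hv₀, rfl⟩ := hz1
      obtain ⟨k₀, hk₀, hzk⟩ := hz2
      have hvk₀ : v₀ * k₀⁻¹ ∈ c := by
        rw [← QuotientGroup.eq_one_iff (v₀ * k₀⁻¹)]
        show ψ (v₀ * k₀⁻¹) = 1
        rw [map_mul, map_inv, ← hzk, mul_inv_cancel]
      have hv₀c : v₀ ∈ c ⊔ K := by
        have : v₀ = (v₀ * k₀⁻¹) * k₀ := by group
        rw [this]
        exact Subgroup.mul_mem _ (Subgroup.mem_sup_left hvk₀) (Subgroup.mem_sup_right hk₀)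
      have : v₀ ∈ c' ⊓ (c ⊔ K) := ⟨hv₀, hv₀c⟩
      rw [hW] at this
      show ψ v₀ ∈ (⊥ : Subgroup (L ⧸ c))
      rw [Subgroup.mem_bot, ← QuotientGroup.eq_one_iff v₀] at *
      exact this
    have hcomm : ∀ a ∈ c'.map ψ, ∀ b ∈ K.map ψ, a * b = b * a := by
      intro a ha b hb
      have hmem : a * b * a⁻¹ * b⁻¹ ∈ c'.map ψ ⊓ K.map ψ := by
        constructor
        · have h1 : b * a⁻¹ * b⁻¹ ∈ c'.map ψ := by
            haveI : (c'.map ψ).Normal := hc'.map ψ (QuotientGroup.mk'_surjective c)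
            exact this.conj_mem _ (Subgroup.inv_mem _ ha) b
          have := Subgroup.mul_mem _ ha h1
          simpa [mul_assoc] using this
        · have h1 : a * b * a⁻¹ ∈ K.map ψ := by
            haveI : (K.map ψ).Normal := hK.map ψ (QuotientGroup.mk'_surjective c)
            exact this.conj_mem _ hb a
          exact Subgroup.mul_mem _ h1 (Subgroup.inv_mem _ hb)
      rw [hdisj, Subgroup.mem_bot] at hmem
      have : a * b * a⁻¹ * b⁻¹ * (b * a) = b * a := by rw [hmem, one_mul]
      calc a * b = a * b * a⁻¹ * b⁻¹ * (b * a) := by group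
      _ = b * a := this
    have hu_mem : ψ u ∈ A.map ψ := by
      have := Subgroup.mem_map_of_mem ψ hu
      rwa [Subgroup.map_sup, PPaux.map_mk'_self, sup_bot_eq] at this
    obtain ⟨s, hs⟩ := IsPGroup.iff_card.mp (hA.map ψ)
    have hords : (ψ u) ^ (p ^ s) = 1 := by
      have := orderOf_dvd_natCard (⟨ψ u, hu_mem⟩ : A.map ψ)
      rw [Subgroup.orderOf_mk, hs] at this
      exact orderOf_dvd_iff_pow_eq_one.mp this
    have hueq : u = v * (k₂ * k₁⁻¹) := by
      have : u * k₁ = v * k₂ := by rw [huk, hvk]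
      calc u = u * k₁ * k₁⁻¹ := by group
      _ = v * k₂ * k₁⁻¹ := by rw [this]
      _ = v * (k₂ * k₁⁻¹) := by group
    have hk₂₁ : k₂ * k₁⁻¹ ∈ K := Subgroup.mul_mem _ hk₂ (Subgroup.inv_mem _ hk₁)
    set a := ψ v with ha_def
    set b := ψ (k₂ * k₁⁻¹) with hb_def
    have hab : ψ u = a * b := by rw [hueq, map_mul]
    have haC : a ∈ c'.map ψ := Subgroup.mem_map_of_mem ψ hv
    have hbK : b ∈ K.map ψ := Subgroup.mem_map_of_mem ψ hk₂₁
    have hcomm' : Commute a b := hcomm a haC b hbK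
    have hpow : a ^ (p ^ s) * b ^ (p ^ s) = 1 := by
      rw [← Commute.mul_pow hcomm', ← hab, hords]
    have hbpow : b ^ (p ^ s) ∈ c'.map ψ ⊓ K.map ψ := by
      constructor
      · rw [(inv_eq_of_mul_eq_one_right hpow).symm]
        exact Subgroup.inv_mem _ (Subgroup.pow_mem _ haC _)
      · exact Subgroup.pow_mem _ hbK _
    rw [hdisj, Subgroup.mem_bot] at hbpow
    have hb1 : b = 1 := by
      have h1 : orderOf b ∣ p ^ s := orderOf_dvd_iff_pow_eq_one.mpr hbpow
      have h2 : orderOf b ∣ Nat.card (K.map ψ) := by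
        have := orderOf_dvd_natCard (⟨b, hbK⟩ : K.map ψ)
        rwa [Subgroup.orderOf_mk] at this
      have hco : Nat.Coprime (p ^ s) (Nat.card (K.map ψ)) :=
        Nat.Coprime.pow_left _ ((Nat.Prime.coprime_iff_not_dvd (Fact.out)).mpr
          (fun hdvd => hKp (hdvd.trans (PPaux.card_map_dvd ψ K))))
      have h3 : orderOf b = 1 := Nat.Coprime.eq_one_of_dvd (Nat.Coprime.coprime_dvd_left h1 hco) h2
      rwa [orderOf_eq_one_iff] at h3
    have hkc : k₂ * k₁⁻¹ ∈ c := by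
      rw [← QuotientGroup.eq_one_iff (k₂ * k₁⁻¹)]
      exact hb1
    have huc' : u ∈ c' := by
      rw [hueq]
      exact Subgroup.mul_mem _ hv (hcc' hkc)
    have huD : u ∈ (A ⊔ c) ⊓ c' := ⟨hu, huc'⟩
    rw [← huk]
    exact Subgroup.mul_mem _ (Subgroup.mem_sup_left huD) (Subgroup.mem_sup_right hk₁)
  · -- W = c' : c' ≤ c ⊔ K
    have hc'le : c' ≤ c ⊔ K := by rw [← hW]; exact inf_le_right
    rintro x ⟨hx1, hx2⟩
    have hxK : x ∈ c ⊔ K := by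
      have : c' ⊔ K ≤ c ⊔ K := sup_le hc'le le_sup_right
      exact this hx2
    have : c ⊔ K ≤ ((A ⊔ c) ⊓ c') ⊔ K := sup_le (hcD.trans le_sup_left) le_sup_right
    exact this hxK

/-- chief factors map to chief factors (or collapse) along a surjection. -/
lemma PPaux.chief_map {N : Type} [Group N] (φ : L →* N) (hφ : Function.Surjective φ)
    (c c' : Subgroup L) (hc' : c'.Normal) (hcc' : c ≤ c')
    (hchief : ∀ X : Subgroup L, X.Normal → c ≤ X → X ≤ c' → X = c ∨ X = c')
    (X : Subgroup N) (hX : X.Normal) (h1 : c.map φ ≤ X) (h2 : X ≤ c'.map φ) :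
    X = c.map φ ∨ X = c'.map φ := by
  haveI := hc'
  have hcle : c ≤ X.comap φ := by
    intro x hx
    exact h1 (Subgroup.mem_map_of_mem φ hx)
  have hX1 : (X.comap φ ⊓ c').Normal := by
    haveI := hX.comap φ
    infer_instance
  have hsplit : X.comap φ = (X.comap φ ⊓ c') ⊔ φ.ker := by
    refine le_antisymm ?_ (sup_le inf_le_left (Subgroup.ker_le_comap φ X))
    intro x hx
    have hφx : φ x ∈ c'.map φ := h2 hx
    obtain ⟨v, hv, hvx⟩ := hφx
    have hw : x * v⁻¹ ∈ φ.ker := by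
      rw [MonoidHom.mem_ker, map_mul, map_inv, hvx, mul_inv_cancel]
    have hvX : v ∈ X.comap φ := by
      have hxv : v = (x * v⁻¹)⁻¹ * x := by group
      rw [hxv]
      exact Subgroup.mul_mem _ (Subgroup.inv_mem _ ((Subgroup.ker_le_comap φ X) hw)) hx
    have : x = (x * v⁻¹) * v := by group
    rw [this]
    exact Subgroup.mul_mem _ (Subgroup.mem_sup_right hw) (Subgroup.mem_sup_left ⟨hvX, hv⟩)
  have hXeq : X = (X.comap φ).map φ := (Subgroup.map_comap_eq_self_of_surjective hφ X).symm
  have hmk : (φ.ker).map φ = ⊥ := (Subgroup.map_eq_bot_iff _).mpr le_rfl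
  rcases hchief (X.comap φ ⊓ c') hX1 (le_inf hcle hcc') inf_le_right with h | h
  · left
    rw [hXeq, hsplit, Subgroup.map_sup, hmk, sup_bot_eq, h]
  · right
    rw [hXeq, hsplit, Subgroup.map_sup, hmk, sup_bot_eq, h]

/-- the prime condition transfers along a surjection with `p'`-kernel. -/
lemma PPaux.step_prime {N : Type} [Group N] [Finite L] {p : ℕ} [Fact p.Prime]
    (φ : L →* N) (hφ : Function.Surjective φ) (hker : ¬ p ∣ Nat.card φ.ker)
    (A c c' : Subgroup L) (hA : IsPGroup p A) (hc : c.Normal) (hc' : c'.Normal)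
    (hcc' : c ≤ c')
    (hchief : ∀ X : Subgroup L, X.Normal → c ≤ X → X ≤ c' → X = c ∨ X = c')
    (hpr : ∀ q : ℕ, q.Prime → q ∣ (Subgroup.normalizer (SetLike.coe ((A ⊔ c) ⊓ c'))).index →
      q ∣ Nat.card ((A ⊔ c) ⊓ c' : Subgroup L) / Nat.card c)
    (q : ℕ) (hq : q.Prime)
    (hqdvd : q ∣ (Subgroup.normalizer (SetLike.coe ((A.map φ ⊔ c.map φ) ⊓ c'.map φ))).index) :
    q ∣ Nat.card ((A.map φ ⊔ c.map φ) ⊓ c'.map φ : Subgroup N) / Nat.card (c.map φ) := by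
  haveI := hc; haveI := hc'
  set D := (A ⊔ c) ⊓ c' with hD
  have hDid : (A.map φ ⊔ c.map φ) ⊓ c'.map φ = D.map φ := by
    rw [← Subgroup.map_sup]
    have h1 : (A ⊔ c).map φ ⊓ c'.map φ = (((A ⊔ c) ⊔ φ.ker) ⊓ (c' ⊔ φ.ker)).map φ := by
      have h2 := Subgroup.map_comap_eq_self_of_surjective hφ ((A ⊔ c).map φ ⊓ c'.map φ)
      rw [Subgroup.comap_inf, Subgroup.comap_map_eq, Subgroup.comap_map_eq] at h2
      exact h2.symm
    rw [h1, PPaux.key_inf_sup_eq A c c' φ.ker hA hc hc' (MonoidHom.normal_ker φ) hker hcc' hchief,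
      Subgroup.map_sup, (Subgroup.map_eq_bot_iff _).mpr le_rfl, sup_bot_eq]
  rw [hDid] at hqdvd ⊢
  have h2 : ((Subgroup.normalizer (SetLike.coe (D.map φ)))).index ∣ ((Subgroup.normalizer (SetLike.coe D))).index := by
    have le1 : ((Subgroup.normalizer (SetLike.coe D))).map φ ≤ (Subgroup.normalizer (SetLike.coe (D.map φ))) := Subgroup.le_normalizer_map φ
    have e1 : (((Subgroup.normalizer (SetLike.coe D))).map φ).index = (((Subgroup.normalizer (SetLike.coe D))) ⊔ φ.ker).index := by
      rw [← Subgroup.index_comap_of_surjective _ hφ, Subgroup.comap_map_eq]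
    calc ((Subgroup.normalizer (SetLike.coe (D.map φ)))).index ∣ (((Subgroup.normalizer (SetLike.coe D))).map φ).index :=
        Subgroup.index_dvd_of_le le1
    _ = (((Subgroup.normalizer (SetLike.coe D))) ⊔ φ.ker).index := e1
    _ ∣ ((Subgroup.normalizer (SetLike.coe D))).index := Subgroup.index_dvd_of_le le_sup_left
  have h3 : q ∣ Nat.card D / Nat.card c := hpr q hq (hqdvd.trans h2)
  have hkD : φ.ker ⊓ D = φ.ker ⊓ c := by
    refine le_antisymm ?_ (le_inf inf_le_left (inf_le_right.trans (le_inf le_sup_right hcc')))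
    rintro x ⟨hx1, hx2⟩
    refine ⟨hx1, ?_⟩
    have : x ∈ (A ⊔ c) ⊓ (c ⊔ φ.ker) :=
      ⟨hx2.1, Subgroup.mem_sup_right hx1⟩
    rw [PPaux.key_inf_eq A c φ.ker hA hc (MonoidHom.normal_ker φ) hker] at this
    exact this
  have e1 : Nat.card D = Nat.card (D.map φ) * Nat.card (φ.ker ⊓ c : Subgroup L) := by
    rw [← hkD]; exact PPaux.card_eq_card_map_mul φ D
  have e2 : Nat.card c = Nat.card (c.map φ) * Nat.card (φ.ker ⊓ c : Subgroup L) :=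
    PPaux.card_eq_card_map_mul φ c
  have hpos : 0 < Nat.card (φ.ker ⊓ c : Subgroup L) := Nat.card_pos
  have : Nat.card (D.map φ) / Nat.card (c.map φ) = Nat.card D / Nat.card c := by
    rw [e1, e2, Nat.mul_div_mul_right _ _ hpos]
  rw [this]
  exact h3

/-- auxiliary: partial chain up to `T`. -/
def PPaux.AuxChain (N : Type) [Group N] (B T : Subgroup N) : Prop :=
  ∃ (n : ℕ) (c : ℕ → Subgroup N),
    c 0 = ⊥ ∧ c n = T ∧
    (∀ i, i ≤ n → (c i).Normal) ∧
    (∀ i, i < n → c i < c (i + 1)) ∧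
    (∀ i, i < n → ∀ X : Subgroup N, X.Normal → c i ≤ X → X ≤ c (i + 1) →
      X = c i ∨ X = c (i + 1)) ∧
    (∀ i, i < n → ∀ q : ℕ, q.Prime →
      q ∣ (Subgroup.normalizer (SetLike.coe ((B ⊔ c i) ⊓ c (i + 1)))).index →
      q ∣ Nat.card ((B ⊔ c i) ⊓ c (i + 1) : Subgroup N) / Nat.card (c i))

/-- the partial `Π`-property transfers along surjections with `p'`-kernel. -/
lemma PPaux.transfer {N : Type} [Group N] [Finite L] {p : ℕ} [Fact p.Prime]
    (φ : L →* N) (hφ : Function.Surjective φ) (hker : ¬ p ∣ Nat.card φ.ker)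
    (A : Subgroup L) (hA : IsPGroup p A)
    (hPi : PartialPiProperty L A) : PartialPiProperty N (A.map φ) := by
  obtain ⟨n, c, hc0, hcn, hnorm, hlt, hchief, hprime⟩ := hPi
  have hmain : ∀ m, m ≤ n → PPaux.AuxChain N (A.map φ) ((c m).map φ) := by
    intro m
    induction m with
    | zero =>
      intro _
      refine ⟨0, fun _ => ⊥, rfl, ?_, ?_, ?_, ?_, ?_⟩
      · rw [hc0, Subgroup.map_bot]
      · intro i _; infer_instance
      · intro i hi; omega
      · intro i hi; omega
      · intro i hi; omega
    | succ m ih =>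
      intro hm1
      have hm : m < n := hm1
      obtain ⟨len, d, hd0, hdT, hdnorm, hdlt, hdchief, hdprime⟩ := ih (le_of_lt hm)
      by_cases heq : (c (m+1)).map φ = (c m).map φ
      · exact ⟨len, d, hd0, by rw [hdT, ← heq], hdnorm, hdlt, hdchief, hdprime⟩
      · have hlt' : (c m).map φ < (c (m+1)).map φ :=
          lt_of_le_of_ne (Subgroup.map_mono (le_of_lt (hlt m hm))) (Ne.symm heq)
        refine ⟨len + 1, fun i => if i ≤ len then d i else (c (m+1)).map φ,
          ?_, ?_, ?_, ?_, ?_, ?_⟩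
        · simp [hd0]
        · simp
        · intro i hi
          by_cases h : i ≤ len
          · simpa [h] using hdnorm i h
          · simp only [h, if_false]
            exact (hnorm (m+1) hm1).map φ hφ
        · intro i hi
          rcases Nat.lt_or_ge i len with h | h
          · have h1 : i ≤ len := le_of_lt h
            have h2 : i + 1 ≤ len := h
            simpa [h1, h2] using hdlt i h
          · have h1 : i = len := by omega
            subst h1
            have h2 : ¬ (i + 1 ≤ i) := by omega
            simpa [h2, hdT] using hlt'
        · intro i hi X hX hX1 hX2
          rcases Nat.lt_or_ge i len with h | h
          · have h1 : i ≤ len := le_of_lt h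
            have h2 : i + 1 ≤ len := h
            simp only [h1, h2, if_true] at hX1 hX2 ⊢
            exact hdchief i h X hX hX1 hX2
          · have h1 : i = len := by omega
            subst h1
            have h2 : ¬ (i + 1 ≤ i) := by omega
            simp only [le_refl, if_true, h2, if_false, hdT] at hX1 hX2 ⊢
            exact PPaux.chief_map φ hφ (c m) (c (m+1)) (hnorm (m+1) hm1) (le_of_lt (hlt m hm))
              (hchief m hm) X hX hX1 hX2
        · intro i hi q hq hqdvd
          rcases Nat.lt_or_ge i len with h | h
          · have h1 : i ≤ len := le_of_lt h
            have h2 : i + 1 ≤ len := h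
            simp only [h1, h2, if_true] at hqdvd ⊢
            exact hdprime i h q hq hqdvd
          · have h1 : i = len := by omega
            subst h1
            have h2 : ¬ (i + 1 ≤ i) := by omega
            simp only [le_refl, if_true, h2, if_false, hdT] at hqdvd ⊢
            exact PPaux.step_prime φ hφ hker A (c m) (c (m+1)) hA (hnorm m (le_of_lt hm))
              (hnorm (m+1) hm1) (le_of_lt (hlt m hm)) (hchief m hm) (hprime m hm) q hq hqdvd
  obtain ⟨n', d, h0, hT, hno, hl, hch, hpr⟩ := hmain n le_rfl
  refine ⟨n', d, h0, ?_, hno, hl, hch, hpr⟩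
  rw [hT, hcn]
  exact Subgroup.map_top_of_surjective φ hφ

end Helpers

section Bridge

variable {G : Type} [Group G] [Finite G] {p : ℕ} [Fact p.Prime]

/-- Frattini-type argument: the normalizer of `Pg K / K` is the image of `N_G(Pg)`. -/
lemma PPaux.frattini_bit (K Pg : Subgroup G) [K.Normal] (hPgP : IsPGroup p Pg)
    (hPgKbot : Pg ⊓ K = ⊥) (hK : ¬ p ∣ Nat.card K) :
    ((Subgroup.normalizer (SetLike.coe Pg))).map (QuotientGroup.mk' K) = (Subgroup.normalizer (SetLike.coe (Pg.map (QuotientGroup.mk' K)))) := by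
  set π := QuotientGroup.mk' K with hπdef
  refine le_antisymm (Subgroup.le_normalizer_map π) ?_
  intro y hy
  obtain ⟨g, rfl⟩ := QuotientGroup.mk'_surjective K y
  have hgN : g ∈ (Subgroup.normalizer (SetLike.coe (Pg ⊔ K))) := by
    have h1 : ((Subgroup.normalizer (SetLike.coe (Pg.map π)))).comap π = (Subgroup.normalizer (SetLike.coe ((Pg.map π).comap π))) :=
      Subgroup.comap_normalizer_eq_of_surjective _ (QuotientGroup.mk'_surjective K)
    have h2 : (Pg.map π).comap π = Pg ⊔ K := by
      rw [Subgroup.comap_map_eq, QuotientGroup.ker_mk']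
    have : g ∈ ((Subgroup.normalizer (SetLike.coe (Pg.map π)))).comap π := hy
    rwa [h1, h2] at this
  set X : Subgroup G := Pg ⊔ K with hXdef
  have hPgX : Pg ≤ X := le_sup_left
  have hcardPgpos : 0 < Nat.card Pg := Nat.card_pos
  have h1 : K.relIndex X = Nat.card Pg := by
    rw [hXdef, Subgroup.relIndex_sup_right, ← Subgroup.inf_relIndex_right, inf_comm, hPgKbot,
      Subgroup.relIndex_bot_left]
  have h2 : Nat.card K * K.relIndex X = Nat.card X := by
    have := Subgroup.relIndex_mul_relIndex (⊥ : Subgroup G) K X bot_le le_sup_right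
    rwa [Subgroup.relIndex_bot_left, Subgroup.relIndex_bot_left] at this
  have hcardX : Nat.card X = Nat.card Pg * Nat.card K := by
    rw [← h2, h1, mul_comm]
  have hrelPg : ∀ W : Subgroup G, W ≤ X → Nat.card W = Nat.card Pg →
      ¬ p ∣ (W.subgroupOf X).index := by
    intro W hWX hcard hdvd
    have h3 : Nat.card W * W.relIndex X = Nat.card X := by
      have := Subgroup.relIndex_mul_relIndex (⊥ : Subgroup G) W X bot_le hWX
      rwa [Subgroup.relIndex_bot_left, Subgroup.relIndex_bot_left] at this
    rw [hcard, hcardX] at h3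
    have h4 : W.relIndex X = Nat.card K := Nat.eq_of_mul_eq_mul_left hcardPgpos h3
    have h5 : (W.subgroupOf X).index = W.relIndex X := rfl
    rw [h5, h4] at hdvd
    exact hK hdvd
  set cg := MulAut.conj g with hcgdef
  set Pg' : Subgroup G := Pg.map cg.toMonoidHom with hPg'def
  have hmemPg' : ∀ x : G, x ∈ Pg' ↔ ∃ w ∈ Pg, g * w * g⁻¹ = x := by
    intro x
    constructor
    · rintro ⟨w, hw, rfl⟩; exact ⟨w, hw, rfl⟩
    · rintro ⟨w, hw, rfl⟩; exact ⟨w, hw, rfl⟩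
  have hPg'X : Pg' ≤ X := by
    rintro _ ⟨x, hx, rfl⟩
    exact (Subgroup.mem_normalizer_iff.mp hgN x).mp (hPgX hx)
  have hcardPg' : Nat.card Pg' = Nat.card Pg :=
    (Nat.card_congr (Subgroup.equivMapOfInjective Pg cg.toMonoidHom cg.injective).toEquiv).symm
  have hP1grp : IsPGroup p (Pg.subgroupOf X) := IsPGroup.comap_subtype hPgP
  have hP2grp : IsPGroup p (Pg'.subgroupOf X) :=
    IsPGroup.comap_subtype (hPgP.map cg.toMonoidHom)
  set S₁ : Sylow p ↥X := hP1grp.toSylow (hrelPg Pg hPgX rfl) with hS₁def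
  set S₂ : Sylow p ↥X := hP2grp.toSylow (hrelPg Pg' hPg'X hcardPg') with hS₂def
  haveI : Finite (Sylow p ↥X) := by infer_instance
  obtain ⟨hh, hhs⟩ := MulAction.exists_smul_eq (↥X) S₂ S₁
  have hsubgrp : MulAut.conj hh • (Pg'.subgroupOf X) = Pg.subgroupOf X := by
    have h6 : (↑(hh • S₂) : Subgroup ↥X) = ↑S₁ := congrArg _ hhs
    rwa [Sylow.coe_subgroup_smul] at h6
  have hmemiff : ∀ y : ↥X, y ∈ Pg.subgroupOf X ↔ (hh⁻¹ * y * hh : ↥X) ∈ Pg'.subgroupOf X := by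
    intro y
    rw [← hsubgrp, Subgroup.mem_pointwise_smul_iff_inv_smul_mem]
    have : (MulAut.conj hh)⁻¹ • y = hh⁻¹ * y * hh := by
      rw [← map_inv (MulAut.conj) hh]
      simp [MulAut.conj_apply]
    rw [this]
  have hnorm' : ((hh : G) * g)⁻¹ ∈ (Subgroup.normalizer (SetLike.coe Pg)) := by
    rw [Subgroup.mem_normalizer_iff]
    intro x
    have hrw : ((hh : G) * g)⁻¹ * x * (((hh : G) * g)⁻¹)⁻¹ =
        g⁻¹ * (((hh : G))⁻¹ * x * (hh : G)) * g := by
      group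
    rw [hrw]
    constructor
    · intro hx
      have hxX : x ∈ X := hPgX hx
      have h7 := (hmemiff ⟨x, hxX⟩).mp hx
      have h8 : ((hh : G))⁻¹ * x * (hh : G) ∈ Pg' := h7
      rw [hmemPg'] at h8
      obtain ⟨w, hw, hweq⟩ := h8
      have : g⁻¹ * (((hh : G))⁻¹ * x * (hh : G)) * g = w := by
        rw [← hweq]; group
      rw [this]
      exact hw
    · intro hx
      set z := g⁻¹ * (((hh : G))⁻¹ * x * (hh : G)) * g with hzdef
      have hxz : x = (hh : G) * (g * z * g⁻¹) * ((hh : G))⁻¹ := by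
        rw [hzdef]; group
      have hgz : g * z * g⁻¹ ∈ Pg' := (hmemPg' _).mpr ⟨z, hx, rfl⟩
      have hxX : x ∈ X := by
        rw [hxz]
        exact Subgroup.mul_mem _ (Subgroup.mul_mem _ hh.2 (hPg'X hgz)) (Subgroup.inv_mem _ hh.2)
      have h9 : ((hh : G))⁻¹ * x * (hh : G) ∈ Pg' := by
        have : ((hh : G))⁻¹ * x * (hh : G) = g * z * g⁻¹ := by rw [hxz]; group
        rw [this]; exact hgz
      exact (hmemiff ⟨x, hxX⟩).mpr h9
  have hnorm : (hh : G) * g ∈ (Subgroup.normalizer (SetLike.coe Pg)) := by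
    have := Subgroup.inv_mem _ hnorm'
    rwa [inv_inv] at this
  obtain ⟨u, hu, k, hk, huk⟩ := PPaux.mem_sup_normal (inferInstance : K.Normal)
    (show (hh : G) ∈ Pg ⊔ K from hh.2)
  refine ⟨u⁻¹ * ((hh : G) * g), ?_, ?_⟩
  · exact Subgroup.mul_mem _ (Subgroup.inv_mem _ (Subgroup.le_normalizer hu)) hnorm
  · have hπk : π k = 1 := by
      have : k ∈ π.ker := by rw [hπdef, QuotientGroup.ker_mk']; exact hk
      rwa [MonoidHom.mem_ker] at this
    have hπhh : π (hh : G) = π u := by rw [← huk, map_mul, hπk, mul_one]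
    show π (u⁻¹ * ((hh : G) * g)) = π g
    rw [map_mul, map_mul, map_inv, hπhh]
    group

/-- maximal subgroups correspond. -/
lemma PPaux.coatom_transfer {K Pg : Subgroup G} [K.Normal]
    (hPgKbot : Pg ⊓ K = ⊥) (M : Subgroup (G ⧸ K))
    (hMle : M ≤ Pg.map (QuotientGroup.mk' K))
    (hMco : IsCoatom (M.subgroupOf (Pg.map (QuotientGroup.mk' K)))) :
    IsCoatom (((M.comap (QuotientGroup.mk' K) ⊓ Pg)).subgroupOf Pg) := by
  set π := QuotientGroup.mk' K with hπdef
  set Q : Subgroup (G ⧸ K) := Pg.map π with hQdef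
  set M₀ : Subgroup G := M.comap π ⊓ Pg with hM₀def
  have hM₀Pg : M₀ ≤ Pg := inf_le_right
  have hinj : ∀ x ∈ Pg, ∀ y ∈ Pg, π x = π y → x = y := by
    intro x hx y hy hxy
    have h1 : x * y⁻¹ ∈ K := by
      have : x * y⁻¹ ∈ π.ker := by
        rw [MonoidHom.mem_ker, map_mul, map_inv, hxy, mul_inv_cancel]
      rwa [hπdef, QuotientGroup.ker_mk'] at this
    have h2 : x * y⁻¹ ∈ Pg ⊓ K := ⟨Subgroup.mul_mem _ hx (Subgroup.inv_mem _ hy), h1⟩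
    rw [hPgKbot, Subgroup.mem_bot] at h2
    calc x = (x * y⁻¹) * y := by group
    _ = y := by rw [h2, one_mul]
  have hmaple : ∀ U V : Subgroup G, U ≤ Pg → V ≤ Pg → U.map π ≤ V.map π → U ≤ V := by
    intro U V hU hV hle x hx
    obtain ⟨v, hv, hveq⟩ := hle (Subgroup.mem_map_of_mem π hx)
    rwa [← hinj v (hV hv) x (hU hx) hveq]
  have hM₀map : M₀.map π = M := by
    apply le_antisymm
    · rintro _ ⟨x, hx, rfl⟩
      exact hx.1
    · intro m hm
      obtain ⟨x, hx, rfl⟩ := hMle hm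
      exact ⟨x, ⟨hm, hx⟩, rfl⟩
  constructor
  · intro htop
    rw [Subgroup.subgroupOf_eq_top] at htop
    apply hMco.1
    rw [Subgroup.subgroupOf_eq_top]
    rw [← hM₀map]
    exact fun q hq => by
      obtain ⟨x, hx, rfl⟩ := hq
      exact Subgroup.mem_map_of_mem π (htop hx)
  · intro B hB
    set B₀ : Subgroup G := B.map Pg.subtype with hB₀def
    have hB₀Pg : B₀ ≤ Pg := Subgroup.map_subtype_le B
    have hM₀B₀ : M₀ ≤ B₀ := by
      have h1 : (M₀.subgroupOf Pg).map Pg.subtype ≤ B₀ :=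
        Subgroup.map_subtype_le_map_subtype.mpr (le_of_lt hB)
      rwa [Subgroup.subgroupOf_map_subtype, inf_of_le_left hM₀Pg] at h1
    have hne : M₀ ≠ B₀ := by
      intro heq
      apply ne_of_lt hB
      apply Subgroup.map_injective Pg.subtype_injective
      rw [Subgroup.subgroupOf_map_subtype, inf_of_le_left hM₀Pg, heq]
    have hBQ : (B₀.map π).subgroupOf Q = ⊤ := by
      apply hMco.2
      have hle1 : M.subgroupOf Q ≤ (B₀.map π).subgroupOf Q := by
        apply Subgroup.comap_mono
        rw [← hM₀map]
        exact Subgroup.map_mono hM₀B₀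
      refine lt_of_le_of_ne hle1 ?_
      intro heq
      apply hne
      apply le_antisymm hM₀B₀
      apply hmaple B₀ M₀ hB₀Pg hM₀Pg
      rw [hM₀map]
      have h3 : ((B₀.map π).subgroupOf Q).map Q.subtype = (M.subgroupOf Q).map Q.subtype := by
        rw [heq]
      rw [Subgroup.subgroupOf_map_subtype, Subgroup.subgroupOf_map_subtype,
        inf_of_le_left (Subgroup.map_mono hB₀Pg : B₀.map π ≤ Q),
        inf_of_le_left hMle] at h3
      exact le_of_eq h3
    rw [Subgroup.subgroupOf_eq_top] at hBQ
    have hPgB₀ : Pg ≤ B₀ := by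
      apply hmaple Pg B₀ le_rfl hB₀Pg
      exact hBQ
    have hB₀eq : B₀ = Pg := le_antisymm hB₀Pg hPgB₀
    apply Subgroup.map_injective Pg.subtype_injective
    rw [hB₀def] at hB₀eq
    rw [hB₀eq]
    rw [← MonoidHom.range_eq_map, Subgroup.range_subtype]

end Bridge

/-- Let `H ⊴ G`, `P` a Sylow `p`-subgroup of `H`, and `K ⊴ G` a normal `p'`-subgroup of
the finite group `G`. If every maximal subgroup of `P` satisfies the partial
`Π`-property in `N_G(P)`, then every maximal subgroup of `PK/K` satisfies the partial
`Π`-property in `N_{G/K}(PK/K)`. -/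
theorem partialPi_max_quotient_pPrime (G : Type) [Group G] [Finite G] (p : ℕ)
    [Fact p.Prime] (H : Subgroup G) [H.Normal] (P : Sylow p ↥H)
    (K : Subgroup G) [K.Normal] (hK : ¬ p ∣ Nat.card K)
    (Pg : Subgroup G) (hPg : Pg = (P : Subgroup ↥H).map H.subtype)
    (h : ∀ M : Subgroup G, M ≤ Pg → IsCoatom (M.subgroupOf Pg) →
      PartialPiProperty ↥(Subgroup.normalizer (Pg : Set G)) (M.subgroupOf (Subgroup.normalizer (Pg : Set G)))) :
    ∀ M : Subgroup (G ⧸ K), M ≤ Pg.map (QuotientGroup.mk' K) →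
      IsCoatom (M.subgroupOf (Pg.map (QuotientGroup.mk' K))) →
      PartialPiProperty ↥(Subgroup.normalizer ((Pg.map (QuotientGroup.mk' K) : Subgroup (G ⧸ K)) : Set (G ⧸ K)))
        (M.subgroupOf (Subgroup.normalizer ((Pg.map (QuotientGroup.mk' K) : Subgroup (G ⧸ K)) : Set (G ⧸ K)))) := by
  intro M hMle hMco
  set π := QuotientGroup.mk' K with hπdef
  set Q : Subgroup (G ⧸ K) := Pg.map π with hQdef
  set L : Subgroup G := (Subgroup.normalizer (SetLike.coe Pg)) with hLdef
  have hPgP : IsPGroup p Pg := by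
    rw [hPg]
    exact (P.isPGroup').map H.subtype
  obtain ⟨kk, hkk⟩ := IsPGroup.iff_card.mp hPgP
  have hPgKbot : Pg ⊓ K = ⊥ := by
    apply inf_eq_bot_of_coprime
    rw [hkk]
    exact Nat.Coprime.pow_left _ ((Nat.Prime.coprime_iff_not_dvd Fact.out).mpr hK)
  have hFrat : L.map π = (Subgroup.normalizer (SetLike.coe Q)) := PPaux.frattini_bit K Pg hPgP hPgKbot hK
  have hmem : ∀ x : ↥L, (π.comp L.subtype) x ∈ (Subgroup.normalizer (SetLike.coe Q)) := by
    intro x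
    rw [← hFrat]
    exact Subgroup.mem_map_of_mem π x.2
  set φ : ↥L →* ↥((Subgroup.normalizer (SetLike.coe Q))) := (π.comp L.subtype).codRestrict _ hmem with hφdef
  have hφs : Function.Surjective φ := by
    rintro ⟨y, hy⟩
    rw [← hFrat] at hy
    obtain ⟨x, hx, rfl⟩ := hy
    exact ⟨⟨x, hx⟩, rfl⟩
  have hφker : ¬ p ∣ Nat.card φ.ker := by
    intro hdvd
    apply hK
    refine hdvd.trans ?_
    have hle : (φ.ker).map L.subtype ≤ K := by
      rintro _ ⟨x, hx, rfl⟩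
      have : φ x = 1 := hx
      have h2 : π (x : G) = 1 := congrArg Subtype.val this
      rwa [← QuotientGroup.ker_mk' K, MonoidHom.mem_ker]
    calc Nat.card φ.ker = Nat.card ((φ.ker).map L.subtype) :=
        Nat.card_congr (Subgroup.equivMapOfInjective _ _ L.subtype_injective).toEquiv
    _ ∣ Nat.card K := Subgroup.card_dvd_of_le hle
  set M₀ : Subgroup G := (M.comap π) ⊓ Pg with hM₀def
  have hM₀Pg : M₀ ≤ Pg := inf_le_right
  have hM₀map : M₀.map π = M := by
    apply le_antisymm
    · rintro _ ⟨x, hx, rfl⟩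
      exact hx.1
    · intro m hm
      obtain ⟨x, hx, rfl⟩ := hMle hm
      exact ⟨x, ⟨hm, hx⟩, rfl⟩
  have hM₀co : IsCoatom (M₀.subgroupOf Pg) := PPaux.coatom_transfer hPgKbot M hMle hMco
  have hPP := h M₀ hM₀Pg hM₀co
  have hA : IsPGroup p (M₀.subgroupOf L) := by
    have h1 : IsPGroup p M₀ :=
      IsPGroup.of_equiv (hPgP.to_subgroup (M₀.subgroupOf Pg))
        (Subgroup.subgroupOfEquivOfLe hM₀Pg)
    exact IsPGroup.of_equiv h1
      (Subgroup.subgroupOfEquivOfLe (hM₀Pg.trans Subgroup.le_normalizer)).symm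
  have hmain := PPaux.transfer φ hφs hφker _ hA hPP
  have hid : (M₀.subgroupOf L).map φ = M.subgroupOf (Subgroup.normalizer (SetLike.coe Q)) := by
    apply Subgroup.map_injective ((Subgroup.normalizer (SetLike.coe Q))).subtype_injective
    rw [Subgroup.map_map, Subgroup.subgroupOf_map_subtype]
    have hcomp : ((Subgroup.normalizer (SetLike.coe Q))).subtype.comp φ = π.comp L.subtype := by
      ext x; rfl
    rw [hcomp, ← Subgroup.map_map, Subgroup.subgroupOf_map_subtype,
      inf_of_le_left (hM₀Pg.trans Subgroup.le_normalizer), hM₀map,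
      inf_of_le_left (hMle.trans Subgroup.le_normalizer)]
  rwa [hid] at hmain
end

section
/- Let 𝔉 be a saturated formation containing the class of all supersoluble groups and E a cyclic normal subgroup of a finite group G with G/E ∈ 𝔉. Then G ∈ 𝔉. -/
/-- A finite group is supersoluble: it has a chain of normal subgroups with cyclic
factors (`c (i+1) = c i ⟨x⟩` for some `x`). -/
def IsSupersoluble (H : Type) [Group H] : Prop :=
  ∃ (n : ℕ) (c : ℕ → Subgroup H),
    c 0 = ⊥ ∧ c n = ⊤ ∧ (∀ i, i ≤ n → (c i).Normal) ∧
    (∀ i, i < n → c i ≤ c (i + 1)) ∧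
    (∀ i, i < n → ∃ x ∈ c (i + 1), c (i + 1) ≤ c i ⊔ Subgroup.zpowers x)

/-- `F` respects isomorphisms. -/
def RespectsIso (F : ∀ (H : Type) [Group H], Prop) : Prop :=
  ∀ (H K : Type) [Group H] [Group K], (H ≃* K) → F H → F K

/-- `F` is closed under quotients. -/
def QuotientClosed (F : ∀ (H : Type) [Group H], Prop) : Prop :=
  ∀ (H : Type) [Group H] (N : Subgroup H) [N.Normal], F H → F (H ⧸ N)

/-- `F` is closed under subdirect products: if `N₁ ∩ N₂ = 1` and both `H/N₁` and
`H/N₂` lie in `F`, then so does `H`. -/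
def SubdirectClosed (F : ∀ (H : Type) [Group H], Prop) : Prop :=
  ∀ (H : Type) [Group H] (N₁ N₂ : Subgroup H) [N₁.Normal] [N₂.Normal],
    N₁ ⊓ N₂ = ⊥ → F (H ⧸ N₁) → F (H ⧸ N₂) → F H

/-- `F` is saturated: if `H/N ∈ F` for some normal subgroup `N ≤ Φ(H)`, then `H ∈ F`. -/
def Saturated (F : ∀ (H : Type) [Group H], Prop) : Prop :=
  ∀ (H : Type) [Group H] [Finite H] (N : Subgroup H) [N.Normal],
    N ≤ frattini H → F (H ⧸ N) → F H


open scoped Pointwise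

/-- `MulAut` of `Multiplicative A` is `AddAut A`. -/
def mulAutMultiplicativeEquiv (A : Type*) [AddGroup A] :
    MulAut (Multiplicative A) ≃* Multiplicative (AddAut A) :=
  MulAutMultiplicative A

lemma isCyclic_mulAut_of_prime_card {H : Type*} [Group H] {p : ℕ} [hp : Fact p.Prime]
    (h : Nat.card H = p) : IsCyclic (MulAut H) := by
  haveI : Finite H := Nat.finite_of_card_ne_zero (by rw [h]; exact hp.out.pos.ne')
  haveI : IsCyclic H := isCyclic_of_prime_card h
  haveI : NeZero p := ⟨hp.out.pos.ne'⟩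
  have e0 : Multiplicative (ZMod p) ≃* H := by
    apply mulEquivOfCyclicCardEq
    simp [h, Nat.card_zmod]
  have e : (ZMod p)ˣ ≃* MulAut H :=
    ((AddEquiv.toMultiplicativeRight (ZMod.AddAutEquivUnits p).symm).trans (mulAutMultiplicativeEquiv (ZMod p)).symm).trans
      (MulAut.congr e0)
  exact isCyclic_of_surjective e.toMonoidHom e.surjective

-- supersolubility of G with N normal of prime order and G/N cyclic
lemma isSupersoluble_of_norm (G : Type) [Group G] (N : Subgroup G) [hN : N.Normal]
    (h1 : IsCyclic ↥N) (h2 : IsCyclic (G ⧸ N)) : IsSupersoluble G := by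
  classical
  refine ⟨2, fun i => if i = 0 then ⊥ else if i = 1 then N else ⊤, by simp, by norm_num, ?_, ?_, ?_⟩
  · intro i _
    dsimp only
    split_ifs
    · infer_instance
    · exact hN
    · infer_instance
  · intro i hi
    interval_cases i <;> simp
  · intro i hi
    interval_cases i
    · obtain ⟨g, hg⟩ := h1.exists_generator
      refine ⟨(g : G), by simp only [reduceIte]; exact g.2, ?_⟩
      simp only [show (1 : ℕ) ≠ 0 by norm_num, if_false, if_pos rfl, reduceIte]
      intro y hy
      obtain ⟨k, hk⟩ := hg ⟨y, hy⟩
      refine Subgroup.mem_sup_right ⟨k, ?_⟩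
      simpa [Subgroup.coe_zpow] using congrArg Subtype.val hk
    · obtain ⟨q, hq⟩ := h2.exists_generator
      obtain ⟨xg, rfl⟩ := QuotientGroup.mk_surjective q
      refine ⟨xg, by simp, ?_⟩
      simp only [show (2 : ℕ) ≠ 0 by norm_num, show (2 : ℕ) ≠ 1 by norm_num,
        show (1 : ℕ) ≠ 0 by norm_num, if_false, if_pos rfl, reduceIte]
      intro y _
      obtain ⟨k, hk⟩ := hq (QuotientGroup.mk y)
      have h3 : (QuotientGroup.mk (xg ^ k) : G ⧸ N) = QuotientGroup.mk y := by
        simpa using hk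
      have hmem : (xg ^ k)⁻¹ * y ∈ N := QuotientGroup.eq.mp h3
      have hy : y = xg ^ k * ((xg ^ k)⁻¹ * y) := by group
      rw [hy]
      exact Subgroup.mul_mem _ (Subgroup.mem_sup_right ⟨k, rfl⟩) (Subgroup.mem_sup_left hmem)

theorem main_aux (F : ∀ (H : Type) [Group H], Prop)
    (hiso : RespectsIso F) (hq : QuotientClosed F) (hsd : SubdirectClosed F)
    (hsat : Saturated F)
    (hU : ∀ (H : Type) [Group H] [Finite H], IsSupersoluble H → F H) :
    ∀ (n : ℕ) (G : Type) [Group G] [Finite G], Nat.card G ≤ n →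
      ∀ (E : Subgroup G) [E.Normal], IsCyclic ↥E → F (G ⧸ E) → F G := by
  intro n
  induction n with
  | zero =>
    intro G _ _ hcard
    exact absurd hcard (by have := Nat.card_pos (α := G); omega)
  | succ n ih =>
    intro G _ _ hcard E hEnorm hEcyc hGE
    by_cases hEbot : E = ⊥
    · subst hEbot
      exact hiso _ _ (QuotientGroup.quotientBot (G := G)) hGE
    -- E nontrivial; find N ≤ E normal in G of prime order p
    haveI : Nontrivial ↥E := (Subgroup.nontrivial_iff_ne_bot E).mpr hEbot
    have h1 : 1 < Nat.card ↥E := Finite.one_lt_card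
    set p := (Nat.card ↥E).minFac with hpdef
    have hp : p.Prime := Nat.minFac_prime (by omega)
    haveI : Fact p.Prime := ⟨hp⟩
    have hpdvd : p ∣ Nat.card ↥E := Nat.minFac_dvd _
    obtain ⟨x, hx⟩ := exists_prime_orderOf_dvd_card' p hpdvd
    have hcomm : ∀ a ∈ E, ∀ b ∈ E, a * b = b * a := by
      letI : CommGroup ↥E := IsCyclic.commGroup
      intro a ha b hb
      exact congrArg Subtype.val (mul_comm (⟨a, ha⟩ : ↥E) ⟨b, hb⟩)
    set N : Subgroup G :=
      { carrier := {g | g ∈ E ∧ g ^ p = 1}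
        one_mem' := ⟨E.one_mem, one_pow p⟩
        mul_mem' := by
          rintro a b ⟨ha, hap⟩ ⟨hb, hbp⟩
          refine ⟨E.mul_mem ha hb, ?_⟩
          have hab : Commute a b := hcomm a ha b hb
          rw [hab.mul_pow, hap, hbp, one_mul]
        inv_mem' := by
          rintro a ⟨ha, hap⟩
          exact ⟨E.inv_mem ha, by rw [inv_pow, hap, inv_one]⟩ } with hNdef
    have hNmem : ∀ g : G, g ∈ N ↔ g ∈ E ∧ g ^ p = 1 := fun g => Iff.rfl
    haveI hNnorm : N.Normal := by
      constructor
      intro g hg h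
      refine ⟨hEnorm.conj_mem g hg.1 h, ?_⟩
      have hcp := map_pow (MulAut.conj h) g p
      simp only [MulAut.conj_apply] at hcp
      rw [← hcp, hg.2, mul_one, mul_inv_cancel]
    have hNE : N ≤ E := fun g hg => hg.1
    have hxN : (x : G) ∈ N := by
      refine ⟨x.2, ?_⟩
      have h2 : x ^ p = 1 := by rw [← hx]; exact pow_orderOf_eq_one x
      exact_mod_cast congrArg Subtype.val h2
    have hNcard : Nat.card ↥N = p := by
      have hge : p ≤ Nat.card ↥N := by
        have hzp : Subgroup.zpowers (x : G) ≤ N := Subgroup.zpowers_le.mpr hxN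
        have hc1 : Nat.card ↥(Subgroup.zpowers (x : G)) = p := by
          rw [Nat.card_zpowers, Subgroup.orderOf_coe, hx]
        calc p = Nat.card ↥(Subgroup.zpowers (x : G)) := hc1.symm
          _ ≤ Nat.card ↥N := Subgroup.card_le_of_le hzp
      have hle : Nat.card ↥N ≤ p := by
        classical
        have hinj : Function.Injective (fun g : ↥N =>
            (⟨⟨g.1, g.2.1⟩, Subtype.ext (by simpa using g.2.2)⟩ : {a : ↥E // a ^ p = 1})) := by
          intro a b hab
          have h5 := congrArg (fun z : {a : ↥E // a ^ p = 1} => (z.1 : G)) hab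
          exact Subtype.ext h5
        have hcle : Nat.card ↥N ≤ Nat.card {a : ↥E // a ^ p = 1} :=
          Nat.card_le_card_of_injective _ hinj
        have hEle : Nat.card {a : ↥E // a ^ p = 1} ≤ p := by
          haveI : Fintype ↥E := Fintype.ofFinite _
          have hb := IsCyclic.card_pow_eq_one_le (α := ↥E) (n := p) hp.pos
          rw [Nat.card_eq_fintype_card, Fintype.card_subtype]
          convert hb using 2
        exact le_trans hcle hEle
      exact le_antisymm hle hge
    -- F (G ⧸ N)
    haveI := hEcyc
    have key : F (G ⧸ N) := by
      have hcq : Nat.card (G ⧸ N) ≤ n := by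
        have e := Subgroup.card_eq_card_quotient_mul_card_subgroup N
        have h2 : 1 ≤ Nat.card (G ⧸ N) := Nat.card_pos
        have h3 : Nat.card (G ⧸ N) * 2 ≤ Nat.card (G ⧸ N) * p :=
          Nat.mul_le_mul_left _ hp.two_le
        rw [hNcard] at e
        omega
      have hcyc : IsCyclic ↥(E.map (QuotientGroup.mk' N)) :=
        isCyclic_of_surjective ((QuotientGroup.mk' N).subgroupMap E)
          ((QuotientGroup.mk' N).subgroupMap_surjective E)
      have hiso3 : F ((G ⧸ N) ⧸ E.map (QuotientGroup.mk' N)) :=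
        hiso _ _ (QuotientGroup.quotientQuotientEquivQuotient N E hNE).symm hGE
      exact ih (G ⧸ N) hcq (E.map (QuotientGroup.mk' N)) hcyc hiso3
    by_cases hfr : N ≤ frattini G
    · exact hsat G N hfr key
    -- find maximal subgroup M avoiding N
    have hexM : ∃ M : Subgroup G, IsCoatom M ∧ ¬ N ≤ M := by
      by_contra hcon
      push_neg at hcon
      exact hfr (le_iInf fun M => le_iInf fun hM => hcon M hM)
    obtain ⟨M, hM, hNM⟩ := hexM
    have hsup : N ⊔ M = ⊤ := by
      refine hM.2 _ (lt_of_le_of_ne le_sup_right ?_)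
      intro h
      exact hNM (h ▸ le_sup_left)
    have hinf : N ⊓ M = ⊥ := by
      have hdvd : Nat.card ↥(N ⊓ M) ∣ p := hNcard ▸ Subgroup.card_dvd_of_le inf_le_left
      rcases (Nat.Prime.eq_one_or_self_of_dvd hp _ hdvd) with h | h
      · exact Subgroup.card_eq_one.mp h
      · exfalso
        have : N ⊓ M = N := Subgroup.eq_of_le_of_card_ge inf_le_left (by rw [hNcard, h])
        exact hNM (this ▸ inf_le_right)
    set C : Subgroup G := Subgroup.centralizer (N : Set G) with hCdef
    haveI hCnorm : C.Normal := by
      constructor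
      intro c hc g
      rw [Subgroup.mem_centralizer_iff] at hc ⊢
      intro h hh
      have hh' : g⁻¹ * h * g ∈ N := by
        simpa using hNnorm.conj_mem h hh g⁻¹
      have h2 := hc _ hh'
      calc h * (g * c * g⁻¹) = g * ((g⁻¹ * h * g) * c) * g⁻¹ := by group
        _ = g * (c * (g⁻¹ * h * g)) * g⁻¹ := by rw [h2]
        _ = (g * c * g⁻¹) * h := by group
    have hNC : N ≤ C := fun a ha =>
      Subgroup.mem_centralizer_iff.mpr fun b hb => hcomm b (hNE hb) a (hNE ha)
    set D : Subgroup G := C ⊓ M with hDdef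
    have hDN : N ⊓ D = ⊥ := by
      rw [eq_bot_iff, ← hinf]
      exact inf_le_inf_left N inf_le_right
    haveI hDnorm : D.Normal := by
      rw [← Subgroup.normalizer_eq_top_iff]
      refine top_unique ?_
      rw [← hsup]
      refine sup_le ?_ ?_
      · intro a ha
        rw [Subgroup.mem_normalizer_iff]
        intro h
        constructor
        · rintro ⟨hhC, hhM⟩
          have h3 : a * h * a⁻¹ = h := by rw [hhC a ha]; group
          rw [h3]
          exact ⟨hhC, hhM⟩
        · rintro ⟨hC', hM'⟩
          have hx2 := hC' a ha
          have h3 : a * h * a⁻¹ = h := by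
            have hr : a * h * a⁻¹ * a = a * h := by group
            rw [hr] at hx2
            exact mul_left_cancel hx2
          rw [← h3]
          exact ⟨hC', hM'⟩
      · intro m hm
        rw [Subgroup.mem_normalizer_iff]
        intro h
        constructor
        · rintro ⟨hhC, hhM⟩
          exact ⟨hCnorm.conj_mem h hhC m, M.mul_mem (M.mul_mem hm hhM) (M.inv_mem hm)⟩
        · rintro ⟨hhC, hhM⟩
          have h1 : m⁻¹ * (m * h * m⁻¹) * m ∈ C := by
            have := hCnorm.conj_mem _ hhC m⁻¹
            rwa [inv_inv] at this
          have h2 : m⁻¹ * (m * h * m⁻¹) * m ∈ M :=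
            M.mul_mem (M.mul_mem (M.inv_mem hm) hhM) hm
          have he : m⁻¹ * (m * h * m⁻¹) * m = h := by group
          rw [he] at h1 h2
          exact ⟨h1, h2⟩
    have hCsub : C ≤ N ⊔ D := by
      intro c hc
      have hcmem : c ∈ N ⊔ M := by rw [hsup]; trivial
      have : c ∈ (N : Set G) * (M : Set G) := by
        rw [← Subgroup.normal_mul]; exact hcmem
      obtain ⟨nn, hnn, mm, hmm, rfl⟩ := this
      have hmC : mm ∈ C := by
        have : nn⁻¹ * (nn * mm) ∈ C := C.mul_mem (C.inv_mem (hNC hnn)) hc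
        simpa using this
      exact Subgroup.mul_mem _ (Subgroup.mem_sup_left hnn)
        (Subgroup.mem_sup_right ⟨hmC, hmm⟩)
    by_cases hDbot : D = ⊥
    · -- C = N, so G/N is cyclic; G supersoluble
      have hCN : C = N := le_antisymm (by rw [hDbot, sup_bot_eq] at hCsub; exact hCsub) hNC
      set φ : G →* MulAut ↥N := MulAut.conjNormal with hφdef
      have hker : φ.ker = C := by
        ext g
        constructor
        · intro hg
          rw [Subgroup.mem_centralizer_iff]
          intro h hh
          have h0 : φ g = 1 := hg
          have h1 : ((φ g) ⟨h, hh⟩ : G) = h := by rw [h0]; rfl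
          have h2 : g * h * g⁻¹ = h := by
            calc g * h * g⁻¹ = ((φ g) ⟨h, hh⟩ : G) := by
                  simp [hφdef, MulAut.conjNormal_apply]
              _ = h := h1
          exact (mul_inv_eq_iff_eq_mul.mp h2).symm
        · intro hg
          have : ∀ h : ↥N, φ g h = h := by
            intro h
            ext
            show ((φ g) h : G) = h
            simp only [hφdef, MulAut.conjNormal_apply]
            exact mul_inv_eq_iff_eq_mul.mpr (hg (h : G) h.2).symm
          show φ g = 1
          ext h
          rw [this h]
          rfl
      haveI : IsCyclic (MulAut ↥N) := isCyclic_mulAut_of_prime_card hNcard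
      have e : G ⧸ N ≃* φ.range :=
        (QuotientGroup.quotientMulEquivOfEq (by rw [hker, hCN])).trans
          (QuotientGroup.quotientKerEquivRange φ)
      haveI : IsCyclic (G ⧸ N) := isCyclic_of_surjective e.symm.toMonoidHom e.symm.surjective
      exact hU G (isSupersoluble_of_norm G N (isCyclic_of_prime_card hNcard) this)
    · -- D ≠ ⊥; use subdirect product of G/N and G/D
      haveI : Nontrivial ↥D := (Subgroup.nontrivial_iff_ne_bot D).mpr hDbot
      have hcq : Nat.card (G ⧸ D) ≤ n := by
        have e := Subgroup.card_eq_card_quotient_mul_card_subgroup D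
        have h2 : 1 ≤ Nat.card (G ⧸ D) := Nat.card_pos
        have h3 : 2 ≤ Nat.card ↥D := Finite.one_lt_card
        have h4 : Nat.card (G ⧸ D) * 2 ≤ Nat.card (G ⧸ D) * Nat.card ↥D :=
          Nat.mul_le_mul_left _ h3
        omega
      haveI : IsCyclic ↥N := isCyclic_of_prime_card hNcard
      have hcyc : IsCyclic ↥(N.map (QuotientGroup.mk' D)) :=
        isCyclic_of_surjective ((QuotientGroup.mk' D).subgroupMap N)
          ((QuotientGroup.mk' D).subgroupMap_surjective N)
      have hFND : F (G ⧸ (N ⊔ D)) :=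
        hiso _ _ (QuotientGroup.quotientQuotientEquivQuotient N (N ⊔ D) le_sup_left)
          (hq (G ⧸ N) ((N ⊔ D).map (QuotientGroup.mk' N)) key)
      have hmapeq : (N ⊔ D).map (QuotientGroup.mk' D) = N.map (QuotientGroup.mk' D) := by
        rw [Subgroup.map_sup]
        have : D.map (QuotientGroup.mk' D) = ⊥ := by
          rw [Subgroup.map_eq_bot_iff, QuotientGroup.ker_mk']
        rw [this, sup_bot_eq]
      have hFq : F ((G ⧸ D) ⧸ N.map (QuotientGroup.mk' D)) := by
        refine hiso _ _ ?_ hFND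
        exact ((QuotientGroup.quotientMulEquivOfEq hmapeq.symm).trans
          (QuotientGroup.quotientQuotientEquivQuotient D (N ⊔ D) le_sup_right)).symm
      have hFD : F (G ⧸ D) := ih (G ⧸ D) hcq (N.map (QuotientGroup.mk' D)) hcyc hFq
      exact hsd G N D hDN key hFD

/-- Let `𝔉` be a saturated formation containing all supersoluble groups, and `E` a
cyclic normal subgroup of the finite group `G` with `G/E ∈ 𝔉`. Then `G ∈ 𝔉`. -/
theorem mem_formation_of_cyclic_normal (F : ∀ (H : Type) [Group H], Prop)
    (hiso : RespectsIso F) (hq : QuotientClosed F) (hsd : SubdirectClosed F)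
    (hsat : Saturated F)
    (hU : ∀ (H : Type) [Group H] [Finite H], IsSupersoluble H → F H)
    (G : Type) [Group G] [Finite G] (E : Subgroup G) [E.Normal]
    (hE : IsCyclic ↥E) (hGE : F (G ⧸ E)) :
    F G :=
  main_aux F hiso hq hsd hsat hU (Nat.card G) G le_rfl E hE hGE
end
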